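/- arXiv:2305.01354 — 2 statements merged into one kernel-verified Lean document; each statement's English description precedes it below -/
import Mathlib

section
/- Let (b,c) be a connected graph over X with a cocompact group action G such that H = H_{b,c} is G-invariant, fix x₀ ∈ X, and let R ⊆ G be a normal subgroup. If q ∈ Q(R) is a commutator in G, i.e. q = g⁻¹l⁻¹gl for some g, l ∈ G, then T_q f = f for every harmonic f ∈ 𝓚^R. -/
open MeasureTheory
open scoped BigOperators

noncomputable section

namespace GraphPaper

variable {X : Type*}

/-- The Schrödinger operator `H_{b,c}` of a graph `(b,c)` over `X`. -/
def schrodinger (b : X → X → ℝ) (c : X → ℝ) (f : X → ℝ) : X → ℝ :=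
  fun x => (∑' y, b x y * (f x - f y)) + c x * f x

/-- Membership of `f` in the domain of `H_{b,c}`. -/
def InDom (b : X → X → ℝ) (f : X → ℝ) : Prop :=
  ∀ x, Summable fun y => b x y * |f y|

/-- The graph `b` is connected: any two points are joined by a path of positive weights. -/
def Connected (b : X → X → ℝ) : Prop :=
  ∀ x y : X, Relation.ReflTransGen (fun u v => 0 < b u v) x y

/-- The degree `deg(x) = ∑_y b(x,y) + c(x)`. -/
def deg (b : X → X → ℝ) (c : X → ℝ) (x : X) : ℝ :=
  (∑' y, b x y) + c x

variable {G : Type*} [Group G] [MulAction G X]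

/-- The shift `T_g f (x) = f (g⁻¹ x)`. -/
def shift (g : G) (f : X → ℝ) : X → ℝ := fun x => f (g⁻¹ • x)

/-- `H_{b,c}` is invariant under the shifts by elements of a set `R ⊆ G`. -/
def HInvOn (b : X → X → ℝ) (c : X → ℝ) (R : Set G) : Prop :=
  ∀ g ∈ R, ∀ f : X → ℝ, InDom b f →
    InDom b (shift g f) ∧ schrodinger b c (shift g f) = shift g (schrodinger b c f)

/-- The action of `G` on `X` is cocompact: there is a finite `V` with `G V = X`. -/
def CocompactAction (G X : Type*) [Group G] [MulAction G X] : Prop :=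
  ∃ V : Finset X, ∀ x : X, ∃ g : G, ∃ v ∈ V, x = g • v

/-- The set `𝓗⁺` of nonnegative, not identically zero, harmonic functions. -/
def Hplus (b : X → X → ℝ) (c : X → ℝ) : Set (X → ℝ) :=
  {f | InDom b f ∧ schrodinger b c f = 0 ∧ (∀ x, 0 ≤ f x) ∧ f ≠ 0}

/-- The set `𝓚`: the closure of the normalized positive harmonic functions. -/
def Kset (b : X → X → ℝ) (c : X → ℝ) (x₀ : X) : Set (X → ℝ) :=
  closure {f : X → ℝ | f ∈ Hplus b c ∧ f x₀ = 1}

/-- The set `𝓚^R` of `R`-invariant elements of `𝓚`. -/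
def KsetR (b : X → X → ℝ) (c : X → ℝ) (x₀ : X) (R : Set G) : Set (X → ℝ) :=
  {f ∈ Kset b c x₀ | ∀ g ∈ R, shift g f = f}

/-- `f` is `G`-multiplicative with a character `γ ∈ Hom(G, ℝ_{>0})`. -/
def IsMultiplicative (G : Type*) [Group G] [MulAction G X] (f : X → ℝ) : Prop :=
  ∃ γ : G →* ℝ, (∀ g, 0 < γ g) ∧ ∀ g : G, shift g f = γ g⁻¹ • f

/-- `Q(R) = π⁻¹(Z(G/R))`, the preimage of the centre of `G/R`. -/
def Qsub (R : Subgroup G) [R.Normal] : Subgroup G :=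
  (Subgroup.center (G ⧸ R)).comap (QuotientGroup.mk' R)

/-- The set `𝓜` of multiplicative elements of `𝓚`. -/
def Mset (G : Type*) [Group G] [MulAction G X] (b : X → X → ℝ) (c : X → ℝ) (x₀ : X) :
    Set (X → ℝ) :=
  {f ∈ Kset b c x₀ | IsMultiplicative G f}

/-- The set `𝓚_λ` for the graph `(b, c - λ)`, i.e. for `λ`-harmonic functions. -/
def KsetLam (b : X → X → ℝ) (c : X → ℝ) (x₀ : X) (l : ℝ) : Set (X → ℝ) :=
  closure {f : X → ℝ | InDom b f ∧ (schrodinger b c f = fun x => l * f x) ∧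
    (∀ x, 0 ≤ f x) ∧ f ≠ 0 ∧ f x₀ = 1}

/-- The set `𝓜_λ` of multiplicative elements of `𝓚_λ`. -/
def MsetLam (G : Type*) [Group G] [MulAction G X] (b : X → X → ℝ) (c : X → ℝ) (x₀ : X)
    (l : ℝ) : Set (X → ℝ) :=
  {f ∈ KsetLam b c x₀ l | IsMultiplicative G f}

section AuxGroup

/-- powers of a central element commute with everything -/
lemma central_pow_comm {H : Type*} [Group H] {Q : H} (hc : ∀ z, z * Q = Q * z)
    (z : H) (m : ℕ) : z * Q ^ m = Q ^ m * z := by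
  induction m with
  | zero => simp
  | succ m ih =>
    calc z * Q ^ (m + 1) = z * Q ^ m * Q := by rw [pow_succ, mul_assoc]
    _ = Q ^ m * z * Q := by rw [ih]
    _ = Q ^ m * (z * Q) := by rw [mul_assoc]
    _ = Q ^ m * (Q * z) := by rw [hc z]
    _ = Q ^ (m + 1) * z := by rw [pow_succ]; group

lemma central_comm_aux {H : Type*} [Group H] (A B Q : H) (hc : ∀ z, z * Q = Q * z)
    (hrel : A⁻¹ * B⁻¹ * A * B = Q) : ∀ m : ℕ, A⁻¹ * (B ^ m)⁻¹ * A * B ^ m = Q ^ m := by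
  intro m
  induction m with
  | zero => simp
  | succ m ih =>
    have hBm : (B ^ m)⁻¹ * A * B ^ m = A * Q ^ m := by
      calc (B ^ m)⁻¹ * A * B ^ m = A * (A⁻¹ * (B ^ m)⁻¹ * A * B ^ m) := by group
      _ = A * Q ^ m := by rw [ih]
    calc A⁻¹ * (B ^ (m + 1))⁻¹ * A * B ^ (m + 1)
        = A⁻¹ * B⁻¹ * ((B ^ m)⁻¹ * A * B ^ m) * B := by rw [pow_succ]; group
      _ = A⁻¹ * B⁻¹ * (A * Q ^ m) * B := by rw [hBm]
      _ = A⁻¹ * B⁻¹ * A * (Q ^ m * B) := by group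
      _ = A⁻¹ * B⁻¹ * A * (B * Q ^ m) := by rw [← central_pow_comm hc B m]
      _ = (A⁻¹ * B⁻¹ * A * B) * Q ^ m := by group
      _ = Q * Q ^ m := by rw [hrel]
      _ = Q ^ (m + 1) := by rw [pow_succ']

lemma central_comm_pow {H : Type*} [Group H] (A B Q : H) (hc : ∀ z, z * Q = Q * z)
    (hrel : Q = A⁻¹ * B⁻¹ * A * B) (n : ℕ) :
    (A ^ n)⁻¹ * (B ^ n)⁻¹ * A ^ n * B ^ n = Q ^ (n * n) := by
  have hcinv : ∀ z : H, z * Q⁻¹ = Q⁻¹ * z := by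
    intro z
    have h := hc z
    calc z * Q⁻¹ = Q⁻¹ * (Q * z) * Q⁻¹ := by group
    _ = Q⁻¹ * (z * Q) * Q⁻¹ := by rw [← h]
    _ = Q⁻¹ * z := by group
  have h1 : ∀ m : ℕ, B⁻¹ * (A ^ m)⁻¹ * B * A ^ m = (Q⁻¹) ^ m := by
    apply central_comm_aux B A Q⁻¹ hcinv
    rw [hrel]; group
  have h2 : (A ^ n)⁻¹ * B⁻¹ * A ^ n * B = Q ^ n := by
    calc (A ^ n)⁻¹ * B⁻¹ * A ^ n * B = (B⁻¹ * (A ^ n)⁻¹ * B * A ^ n)⁻¹ := by group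
    _ = ((Q⁻¹) ^ n)⁻¹ := by rw [h1 n]
    _ = Q ^ n := by rw [← inv_pow, inv_inv]
  have h4 := central_comm_aux (A ^ n) B (Q ^ n) (fun z => central_pow_comm hc z n) h2 n
  rw [h4, ← pow_mul]

lemma t_eq_one {t D : ℝ} (ht : 0 < t) (hD : 1 ≤ D)
    (h1 : ∀ n : ℕ, t ^ (n * n) ≤ D ^ n) (h2 : ∀ n : ℕ, 1 ≤ t ^ (n * n) * D ^ n) : t = 1 := by
  rcases lt_trichotomy t 1 with hlt | heq | hgt
  · exfalso
    have hr : 1 < t⁻¹ := by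
      have := inv_strictAnti₀ ht hlt
      simpa using this
    obtain ⟨n, hn⟩ := pow_unbounded_of_one_lt D hr
    have hn0 : n ≠ 0 := by rintro rfl; simp at hn; linarith
    have htn : (0:ℝ) < t ^ (n * n) := pow_pos ht _
    have key : (t⁻¹) ^ (n * n) ≤ D ^ n := by
      rw [inv_pow]
      have h2n := h2 n
      have h3 : (t ^ (n*n))⁻¹ * 1 ≤ (t ^ (n*n))⁻¹ * (t ^ (n*n) * D ^ n) :=
        mul_le_mul_of_nonneg_left h2n (inv_nonneg.mpr htn.le)
      simpa [inv_mul_cancel_left₀ htn.ne'] using h3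
    have h3 : D ^ n < (t⁻¹ ^ n) ^ n := pow_lt_pow_left₀ hn (by linarith) hn0
    rw [← pow_mul] at h3
    linarith
  · exact heq
  · exfalso
    obtain ⟨n, hn⟩ := pow_unbounded_of_one_lt D hgt
    have hn0 : n ≠ 0 := by rintro rfl; simp at hn; linarith
    have h3 : D ^ n < (t ^ n) ^ n := by
      apply pow_lt_pow_left₀ hn (by linarith) hn0
    rw [← pow_mul] at h3
    linarith [h1 n]

end AuxGroup

section AuxGraph

variable {X : Type*} {G : Type*} [Group G] [MulAction G X]
variable {b : X → X → ℝ} {c : X → ℝ}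

/-- Rearranged harmonicity data: nonnegative and `∑_y b x y φ(y) = deg(x) φ(x)`. -/
def H0 (b : X → X → ℝ) (c : X → ℝ) (φ : X → ℝ) : Prop :=
  (∀ x, 0 ≤ φ x) ∧ ∀ x, Summable (fun y => b x y * φ y) ∧
    ∑' y, b x y * φ y = deg b c x * φ x

lemma indom_summable (hb0 : ∀ x y, 0 ≤ b x y) {φ : X → ℝ} (hφ : InDom b φ) (x : X) :
    Summable fun y => b x y * φ y := by
  have h : Summable fun y => |b x y * φ y| := by
    have := hφ x
    refine this.congr fun y => ?_
    rw [abs_mul, abs_of_nonneg (hb0 x y)]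
  exact h.of_abs

lemma harmonic_tsum (hb0 : ∀ x y, 0 ≤ b x y) (hbs : ∀ x, Summable (b x)) {φ : X → ℝ}
    (hdom : InDom b φ) (hharm : schrodinger b c φ = 0) (x : X) :
    ∑' y, b x y * φ y = deg b c x * φ x := by
  have h0 : (∑' y, b x y * (φ x - φ y)) + c x * φ x = 0 := by
    have := congrFun hharm x
    simpa [schrodinger] using this
  have hs1 : Summable fun y => b x y * φ x := (hbs x).mul_right _
  have hs2 := indom_summable hb0 hdom x
  have hsplit : (∑' y, b x y * (φ x - φ y))
      = (∑' y, b x y) * φ x - ∑' y, b x y * φ y := by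
    have he : (fun y => b x y * (φ x - φ y))
        = fun y => b x y * φ x - b x y * φ y := funext fun y => mul_sub _ _ _
    rw [he, Summable.tsum_sub hs1 hs2, tsum_mul_right]
  rw [hsplit] at h0
  simp only [deg]
  linarith

lemma propagate_zero (hb0 : ∀ x y, 0 ≤ b x y) (hconn : Connected b) {w : X → ℝ}
    (hw0 : ∀ x, 0 ≤ w x)
    (hsh : ∀ x, Summable (fun y => b x y * w y) ∧ ∑' y, b x y * w y ≤ deg b c x * w x)
    {v : X} (hv : w v = 0) : ∀ y, w y = 0 := by
  intro y
  have hpath := hconn v y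
  induction hpath with
  | refl => exact hv
  | @tail p z _ hpz ih =>
    have hp : w p = 0 := ih
    have h1 : ∑' yy, b p yy * w yy ≤ 0 := by
      have := (hsh p).2
      rw [hp] at this
      simpa using this
    have h2 : b p z * w z ≤ 0 :=
      le_trans (Summable.le_tsum (hsh p).1 z fun j _ => mul_nonneg (hb0 p j) (hw0 j)) h1
    have h3 : (0:ℝ) ≤ b p z * w z := mul_nonneg (hb0 p z) (hw0 z)
    rcases mul_eq_zero.mp (le_antisymm h2 h3) with h | h
    · exact absurd h (ne_of_gt hpz)
    · exact h

lemma pos_of_harmonic (hb0 : ∀ x y, 0 ≤ b x y) (hbs : ∀ x, Summable (b x))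
    (hconn : Connected b) {φ : X → ℝ} (hdom : InDom b φ) (hharm : schrodinger b c φ = 0)
    (hpos : ∀ x, 0 ≤ φ x) {x₁ : X} (h1 : φ x₁ ≠ 0) : ∀ x, 0 < φ x := by
  intro x
  rcases (hpos x).lt_or_eq with h | h
  · exact h
  · exfalso
    apply h1
    exact propagate_zero hb0 hconn hpos
      (fun z => ⟨indom_summable hb0 hdom z, le_of_eq (harmonic_tsum hb0 hbs hdom hharm z)⟩)
      h.symm x₁

lemma harnack_pair (hb0 : ∀ x y, 0 ≤ b x y) (hconn : Connected b) (x y : X) :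
    ∃ C : ℝ, 0 < C ∧ ∀ φ : X → ℝ, H0 b c φ → φ y ≤ C * φ x := by
  have hpath := hconn x y
  induction hpath with
  | refl => exact ⟨1, one_pos, fun φ _ => by simp⟩
  | @tail p z _ hpz ih =>
    obtain ⟨C, hC, hCle⟩ := ih
    refine ⟨max (deg b c p / b p z) 1 * C,
      mul_pos (lt_of_lt_of_le one_pos (le_max_right _ _)) hC, fun φ hφ => ?_⟩
    have h1 : b p z * φ z ≤ deg b c p * φ p := by
      calc b p z * φ z ≤ ∑' yy, b p yy * φ yy :=
        Summable.le_tsum (hφ.2 p).1 z fun j _ => mul_nonneg (hb0 p j) (hφ.1 j)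
      _ = deg b c p * φ p := (hφ.2 p).2
    have h2 : φ z ≤ deg b c p / b p z * φ p := by
      rw [div_mul_eq_mul_div, le_div_iff₀ hpz, mul_comm]
      exact h1
    have h3 : φ z ≤ max (deg b c p / b p z) 1 * φ p :=
      h2.trans (mul_le_mul_of_nonneg_right (le_max_left _ _) (hφ.1 p))
    calc φ z ≤ max (deg b c p / b p z) 1 * φ p := h3
    _ ≤ max (deg b c p / b p z) 1 * (C * φ x) :=
      mul_le_mul_of_nonneg_left (hCle φ hφ) (le_trans zero_le_one (le_max_right _ _))
    _ = max (deg b c p / b p z) 1 * C * φ x := (mul_assoc _ _ _).symm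

lemma shift_harmonic (hH : HInvOn b c (Set.univ : Set G)) {f : X → ℝ} (hdom : InDom b f)
    (hharm : schrodinger b c f = 0) (u : G) :
    InDom b (fun y => f (u • y)) ∧ schrodinger b c (fun y => f (u • y)) = 0 := by
  have h := hH u⁻¹ (Set.mem_univ _) f hdom
  have he : shift (G := G) u⁻¹ f = fun y => f (u • y) := by
    funext y; simp [shift]
  constructor
  · have := h.1; rwa [he] at this
  · have h2 := h.2
    rw [he] at h2
    rw [h2, hharm]
    funext y; simp [shift]

lemma h0_of_harmonic (hb0 : ∀ x y, 0 ≤ b x y) (hbs : ∀ x, Summable (b x)) {ψ : X → ℝ}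
    (hdom : InDom b ψ) (hharm : schrodinger b c ψ = 0) (hpos : ∀ x, 0 ≤ ψ x)
    {s : ℝ} (hs : 0 ≤ s) : H0 b c (fun y => s * ψ y) := by
  constructor
  · intro x; exact mul_nonneg hs (hpos x)
  · intro x
    have hb := harmonic_tsum hb0 hbs hdom hharm x
    have hsum := indom_summable hb0 hdom x
    have he : (fun y => b x y * (s * ψ y)) = fun y => s * (b x y * ψ y) :=
      funext fun y => by ring
    constructor
    · rw [he]; exact hsum.mul_left s
    · rw [he, tsum_mul_left, hb]; ring

/-- the family of renormalized translates of `f` -/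
def Fam (G : Type*) [Group G] [MulAction G X] (f : X → ℝ) : Set (X → ℝ) :=
  {φ | ∃ s : ℝ, 0 ≤ s ∧ ∃ u : G, φ = fun y => s * f (u • y)}

lemma fam_mem_h0 (hb0 : ∀ x y, 0 ≤ b x y) (hbs : ∀ x, Summable (b x))
    (hH : HInvOn b c (Set.univ : Set G)) {f : X → ℝ} (hdom : InDom b f)
    (hharm : schrodinger b c f = 0) (hfpos : ∀ x, 0 ≤ f x) :
    ∀ φ ∈ Fam G f, H0 b c φ := by
  rintro φ ⟨s, hs, u, rfl⟩
  obtain ⟨hdom', hharm'⟩ := shift_harmonic hH hdom hharm u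
  exact h0_of_harmonic hb0 hbs hdom' hharm' (fun x => hfpos _) hs

lemma fam_precomp {f : X → ℝ} {φ : X → ℝ} (hφ : φ ∈ Fam G f) (a : G) :
    (fun y => φ (a • y)) ∈ Fam G f := by
  obtain ⟨s, hs, u, rfl⟩ := hφ
  exact ⟨s, hs, u * a, by funext y; rw [mul_smul]⟩

end AuxGraph

section AuxWord

variable {X : Type*} {G : Type*} [Group G] [MulAction G X]
variable {b : X → X → ℝ} {c : X → ℝ}

lemma fam_letter (hb0 : ∀ x y, 0 ≤ b x y) (hbs : ∀ x, Summable (b x)) (hconn : Connected b)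
    (hH : HInvOn b c (Set.univ : Set G)) {f : X → ℝ} (hdom : InDom b f)
    (hharm : schrodinger b c f = 0) (hfpos : ∀ x, 0 ≤ f x) (x₀ : X) (wl : G) :
    ∃ C : ℝ, 1 ≤ C ∧ ∀ φ ∈ Fam G f, ∀ a : G, φ ((a * wl) • x₀) ≤ C * φ (a • x₀) := by
  obtain ⟨C₀, _, hle⟩ := harnack_pair (c := c) hb0 hconn x₀ (wl • x₀)
  refine ⟨max C₀ 1, le_max_right _ _, fun φ hφ a => ?_⟩
  have h1 : (fun y => φ (a • y)) ∈ Fam G f := fam_precomp hφ a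
  have h2 := hle _ (fam_mem_h0 hb0 hbs hH hdom hharm hfpos _ h1)
  calc φ ((a * wl) • x₀) = φ (a • wl • x₀) := by rw [mul_smul]
  _ ≤ C₀ * φ (a • x₀) := h2
  _ ≤ max C₀ 1 * φ (a • x₀) :=
    mul_le_mul_of_nonneg_right (le_max_left _ _)
      ((fam_mem_h0 hb0 hbs hH hdom hharm hfpos _ hφ).1 _)

lemma fam_letter_pow (hb0 : ∀ x y, 0 ≤ b x y) (hbs : ∀ x, Summable (b x))
    (hconn : Connected b) (hH : HInvOn b c (Set.univ : Set G)) {f : X → ℝ}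
    (hdom : InDom b f) (hharm : schrodinger b c f = 0) (hfpos : ∀ x, 0 ≤ f x)
    (x₀ : X) (wl : G) :
    ∃ C : ℝ, 1 ≤ C ∧ ∀ (n : ℕ), ∀ φ ∈ Fam G f, ∀ a : G,
      φ ((a * wl ^ n) • x₀) ≤ C ^ n * φ (a • x₀) := by
  obtain ⟨C, hC, hl⟩ := fam_letter hb0 hbs hconn hH hdom hharm hfpos x₀ wl
  refine ⟨C, hC, fun n => ?_⟩
  induction n with
  | zero => intro φ _ a; simp
  | succ n ih =>
    intro φ hφ a
    have e : a * wl ^ (n + 1) = a * wl ^ n * wl := by rw [pow_succ, mul_assoc]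
    calc φ ((a * wl ^ (n + 1)) • x₀) = φ ((a * wl ^ n * wl) • x₀) := by rw [e]
    _ ≤ C * φ ((a * wl ^ n) • x₀) := hl φ hφ _
    _ ≤ C * (C ^ n * φ (a • x₀)) :=
      mul_le_mul_of_nonneg_left (ih φ hφ a) (le_trans zero_le_one hC)
    _ = C ^ (n + 1) * φ (a • x₀) := by ring

lemma word_bound (hb0 : ∀ x y, 0 ≤ b x y) (hbs : ∀ x, Summable (b x))
    (hconn : Connected b) (hH : HInvOn b c (Set.univ : Set G)) {f : X → ℝ}
    (hdom : InDom b f) (hharm : schrodinger b c f = 0) (hfpos : ∀ x, 0 ≤ f x)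
    (x₀ : X) (g l : G) :
    ∃ D : ℝ, 1 ≤ D ∧ ∀ (n : ℕ), ∀ φ ∈ Fam G f,
      φ (((g ^ n)⁻¹ * (l ^ n)⁻¹ * g ^ n * l ^ n) • x₀) ≤ D ^ n * φ x₀ ∧
      φ x₀ ≤ D ^ n * φ (((g ^ n)⁻¹ * (l ^ n)⁻¹ * g ^ n * l ^ n) • x₀) := by
  obtain ⟨Cg, hCg, hg⟩ := fam_letter_pow hb0 hbs hconn hH hdom hharm hfpos x₀ g
  obtain ⟨Cl, hCl, hl⟩ := fam_letter_pow hb0 hbs hconn hH hdom hharm hfpos x₀ l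
  obtain ⟨Cgi, hCgi, hgi⟩ := fam_letter_pow hb0 hbs hconn hH hdom hharm hfpos x₀ g⁻¹
  obtain ⟨Cli, hCli, hli⟩ := fam_letter_pow hb0 hbs hconn hH hdom hharm hfpos x₀ l⁻¹
  have hCg0 : (0:ℝ) ≤ Cg := le_trans zero_le_one hCg
  have hCl0 : (0:ℝ) ≤ Cl := le_trans zero_le_one hCl
  have hCgi0 : (0:ℝ) ≤ Cgi := le_trans zero_le_one hCgi
  have hCli0 : (0:ℝ) ≤ Cli := le_trans zero_le_one hCli
  have hD1 : (1:ℝ) ≤ Cg * Cl * Cgi * Cli := by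
    have h1 : (1:ℝ) ≤ Cg * Cl := one_le_mul_of_one_le_of_one_le hCg hCl
    have h2 : (1:ℝ) ≤ Cg * Cl * Cgi := one_le_mul_of_one_le_of_one_le h1 hCgi
    exact one_le_mul_of_one_le_of_one_le h2 hCli
  refine ⟨Cg * Cl * Cgi * Cli, hD1, fun n φ hφ => ?_⟩
  have hφ0 : ∀ z, 0 ≤ φ z := (fam_mem_h0 hb0 hbs hH hdom hharm hfpos _ hφ).1
  set A1 : G := (g⁻¹) ^ n with hA1
  set A2 : G := (g⁻¹) ^ n * (l⁻¹) ^ n with hA2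
  set A3 : G := (g⁻¹) ^ n * (l⁻¹) ^ n * g ^ n with hA3
  set W : G := (g⁻¹) ^ n * (l⁻¹) ^ n * g ^ n * l ^ n with hW
  have hWe : (g ^ n)⁻¹ * (l ^ n)⁻¹ * g ^ n * l ^ n = W := by
    rw [hW, inv_pow, inv_pow]
  rw [hWe]
  have e1 : (1 : G) * (g⁻¹) ^ n = A1 := by rw [one_mul]
  have e2 : A1 * (l⁻¹) ^ n = A2 := rfl
  have e3 : A2 * g ^ n = A3 := rfl
  have e4 : A3 * l ^ n = W := rfl
  have r1 : A1 * g ^ n = 1 := by rw [hA1]; group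
  have r2 : A2 * l ^ n = A1 := by rw [hA2, hA1]; group
  have r3 : A3 * (g⁻¹) ^ n = A2 := by rw [hA3, hA2]; group
  have r4 : W * (l⁻¹) ^ n = A3 := by rw [hW, hA3]; group
  constructor
  · -- forward
    have f4 : φ (W • x₀) ≤ Cl ^ n * φ (A3 • x₀) := by
      have := hl n φ hφ A3; rwa [e4] at this
    have f3 : φ (A3 • x₀) ≤ Cg ^ n * φ (A2 • x₀) := by
      have := hg n φ hφ A2; rwa [e3] at this
    have f2 : φ (A2 • x₀) ≤ Cli ^ n * φ (A1 • x₀) := by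
      have := hli n φ hφ A1; rwa [e2] at this
    have f1 : φ (A1 • x₀) ≤ Cgi ^ n * φ x₀ := by
      have := hgi n φ hφ 1; rw [e1, one_smul] at this; exact this
    have hc1 : (0:ℝ) ≤ Cl ^ n := pow_nonneg hCl0 n
    have hc2 : (0:ℝ) ≤ Cg ^ n := pow_nonneg hCg0 n
    have hc3 : (0:ℝ) ≤ Cli ^ n := pow_nonneg hCli0 n
    calc φ (W • x₀) ≤ Cl ^ n * φ (A3 • x₀) := f4
    _ ≤ Cl ^ n * (Cg ^ n * φ (A2 • x₀)) := mul_le_mul_of_nonneg_left f3 hc1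
    _ ≤ Cl ^ n * (Cg ^ n * (Cli ^ n * φ (A1 • x₀))) :=
      mul_le_mul_of_nonneg_left (mul_le_mul_of_nonneg_left f2 hc2) hc1
    _ ≤ Cl ^ n * (Cg ^ n * (Cli ^ n * (Cgi ^ n * φ x₀))) :=
      mul_le_mul_of_nonneg_left
        (mul_le_mul_of_nonneg_left (mul_le_mul_of_nonneg_left f1 hc3) hc2) hc1
    _ = (Cg * Cl * Cgi * Cli) ^ n * φ x₀ := by ring
  · -- reverse
    have g1 : φ x₀ ≤ Cg ^ n * φ (A1 • x₀) := by
      have := hg n φ hφ A1; rw [r1, one_smul] at this; exact this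
    have g2 : φ (A1 • x₀) ≤ Cl ^ n * φ (A2 • x₀) := by
      have := hl n φ hφ A2; rwa [r2] at this
    have g3 : φ (A2 • x₀) ≤ Cgi ^ n * φ (A3 • x₀) := by
      have := hgi n φ hφ A3; rwa [r3] at this
    have g4 : φ (A3 • x₀) ≤ Cli ^ n * φ (W • x₀) := by
      have := hli n φ hφ W; rwa [r4] at this
    have hc1 : (0:ℝ) ≤ Cg ^ n := pow_nonneg hCg0 n
    have hc2 : (0:ℝ) ≤ Cl ^ n := pow_nonneg hCl0 n
    have hc3 : (0:ℝ) ≤ Cgi ^ n := pow_nonneg hCgi0 n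
    calc φ x₀ ≤ Cg ^ n * φ (A1 • x₀) := g1
    _ ≤ Cg ^ n * (Cl ^ n * φ (A2 • x₀)) := mul_le_mul_of_nonneg_left g2 hc1
    _ ≤ Cg ^ n * (Cl ^ n * (Cgi ^ n * φ (A3 • x₀))) :=
      mul_le_mul_of_nonneg_left (mul_le_mul_of_nonneg_left g3 hc2) hc1
    _ ≤ Cg ^ n * (Cl ^ n * (Cgi ^ n * (Cli ^ n * φ (W • x₀)))) :=
      mul_le_mul_of_nonneg_left
        (mul_le_mul_of_nonneg_left (mul_le_mul_of_nonneg_left g4 hc3) hc2) hc1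
    _ = (Cg * Cl * Cgi * Cli) ^ n * φ (W • x₀) := by ring

lemma ultra_pigeon {α : Type*} (U : Ultrafilter ℕ) (V : Finset α) :
    ∀ vs : ℕ → α, {k | vs k ∈ V} ∈ U → ∃ v ∈ V, {k | vs k = v} ∈ U := by
  classical
  induction V using Finset.induction_on with
  | empty =>
    intro vs h
    have : {k | vs k ∈ (∅ : Finset α)} = (∅ : Set ℕ) := by simp
    rw [this] at h
    exact absurd h (Filter.empty_notMem _)
  | @insert a s _ ih =>
    intro vs h
    have hsplit : {k | vs k ∈ insert a s} = {k | vs k = a} ∪ {k | vs k ∈ s} := by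
      ext k; simp [Finset.mem_insert]
    rw [hsplit] at h
    rcases (Ultrafilter.union_mem_iff.mp h) with h1 | h2
    · exact ⟨a, Finset.mem_insert_self _ _, h1⟩
    · obtain ⟨v, hv, hv2⟩ := ih vs h2
      exact ⟨v, Finset.mem_insert_of_mem hv, hv2⟩

end AuxWord

section KeyLemma

open Topology Filter

variable {X : Type*} {G : Type*} [Group G] [MulAction G X]
variable {b : X → X → ℝ} {c : X → ℝ}

lemma key_ineq (hb0 : ∀ x y, 0 ≤ b x y) (hbs : ∀ x, Summable (b x))
    (hconn : Connected b) (hcocpt : CocompactAction G X)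
    (hH : HInvOn b c (Set.univ : Set G)) (x₀ : X)
    (R : Subgroup G) [hN : R.Normal] {f : X → ℝ}
    (hdom : InDom b f) (hharm : schrodinger b c f = 0)
    (hfpos : ∀ x, 0 ≤ f x) (hf1 : f x₀ = 1)
    (hfR : ∀ ρ ∈ R, shift ρ f = f)
    {q gg ll : G} (hq : q ∈ Qsub R) (hcomm : q = gg⁻¹ * ll⁻¹ * gg * ll) :
    ∀ x : X, f x ≤ f (q⁻¹ • x) := by
  classical
  have hX : Nonempty X := ⟨x₀⟩
  have hfpos' : ∀ x, 0 < f x :=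
    pos_of_harmonic hb0 hbs hconn hdom hharm hfpos (x₁ := x₀) (by rw [hf1]; exact one_ne_zero)
  set π := QuotientGroup.mk' R with hπdef
  have hcen : ∀ z : G ⧸ R, z * π q = π q * z :=
    fun z => Subgroup.mem_center_iff.mp (Subgroup.mem_comap.mp hq) z
  -- point-level R-invariance
  have hRpt : ∀ ρ ∈ R, ∀ z : X, f (ρ • z) = f z := by
    intro ρ hρ z
    have h := congrFun (hfR ρ⁻¹ (inv_mem hρ)) z
    simpa [shift] using h
  -- transport along equality in the quotient
  have htrans : ∀ u v : G, π u = π v → ∀ y : X, f (u • y) = f (v • y) := by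
    intro u v huv y
    obtain ⟨ρ, hρ, hmul⟩ := (QuotientGroup.mk'_eq_mk' R).mp huv
    have hconj : u * ρ * u⁻¹ ∈ R := hN.conj_mem ρ hρ u
    have h1 : v • y = (u * ρ * u⁻¹) • (u • y) := by
      rw [smul_smul]
      have : u * ρ * u⁻¹ * u = u * ρ := by group
      rw [this, hmul]
    rw [h1, hRpt _ hconj]
  -- commuting q⁻¹ past arbitrary a, modulo R
  have hqa : ∀ a : G, ∀ y : X, f ((a * q⁻¹) • y) = f (q⁻¹ • (a • y)) := by
    intro a y
    have hcom : Commute (π a) (π q) := hcen (π a)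
    have hπ : π (a * q⁻¹) = π (q⁻¹ * a) := by
      simp only [map_mul, map_inv]
      exact hcom.inv_right.eq
    rw [htrans _ _ hπ y, mul_smul]
  -- cocompactness data
  obtain ⟨V, hV⟩ := hcocpt
  choose gx vx hvxmem hxeq using hV
  -- uniform lower bound on the ratio
  choose Cv hCvpos hCvle using fun v : X => harnack_pair (c := c) hb0 hconn (q⁻¹ • v) v
  have hMex : ∃ M : ℝ, 0 < M ∧ ∀ v ∈ V, Cv v ≤ M := by
    rcases V.eq_empty_or_nonempty with hVe | hVne
    · exact ⟨1, one_pos, by simp [hVe]⟩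
    · refine ⟨max (V.sup' hVne Cv) 1, lt_of_lt_of_le one_pos (le_max_right _ _),
        fun v hv => le_trans (Finset.le_sup' Cv hv) (le_max_left _ _)⟩
  obtain ⟨M, hMpos, hMle⟩ := hMex
  -- the infimum t
  set t := ⨅ x : X, f (q⁻¹ • x) / f x with htdef
  have hbdd : BddBelow (Set.range fun x : X => f (q⁻¹ • x) / f x) := by
    refine ⟨0, ?_⟩
    rintro _ ⟨x, rfl⟩
    exact div_nonneg (hfpos _) (hfpos _)
  have htle : ∀ x : X, t ≤ f (q⁻¹ • x) / f x := fun x => ciInf_le hbdd x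
  have htprop : ∀ x : X, t * f x ≤ f (q⁻¹ • x) := by
    intro x
    have h := htle x
    rw [le_div_iff₀ (hfpos' x)] at h
    linarith [h]
  have hratio_lb : ∀ x : X, M⁻¹ ≤ f (q⁻¹ • x) / f x := by
    intro x
    have hv : vx x ∈ V := hvxmem x
    have hphi : (fun y => (1:ℝ) * f (gx x • y)) ∈ Fam G f := ⟨1, zero_le_one, gx x, rfl⟩
    have hH0 := fam_mem_h0 hb0 hbs hH hdom hharm hfpos _ hphi
    have h1 := hCvle (vx x) _ hH0
    simp only [one_mul] at h1
    -- h1 : f (gx x • vx x) ≤ Cv (vx x) * f (gx x • (q⁻¹ • vx x))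
    have h2 : f (gx x • (q⁻¹ • vx x)) = f (q⁻¹ • x) := by
      rw [← mul_smul, hqa (gx x) (vx x), ← hxeq x]
    rw [h2, ← hxeq x] at h1
    have h3 : f x ≤ M * f (q⁻¹ • x) := by
      calc f x ≤ Cv (vx x) * f (q⁻¹ • x) := h1
      _ ≤ M * f (q⁻¹ • x) :=
        mul_le_mul_of_nonneg_right (hMle _ hv) (hfpos _)
    rw [le_div_iff₀ (hfpos' x)]
    calc M⁻¹ * f x ≤ M⁻¹ * (M * f (q⁻¹ • x)) :=
      mul_le_mul_of_nonneg_left h3 (inv_nonneg.mpr hMpos.le)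
    _ = f (q⁻¹ • x) := by field_simp
  have htpos : 0 < t := by
    have : M⁻¹ ≤ t := le_ciInf hratio_lb
    exact lt_of_lt_of_le (inv_pos.mpr hMpos) this
  -- minimizing sequence
  have hseq : ∀ k : ℕ, ∃ x : X, f (q⁻¹ • x) / f x < t + 1 / ((k : ℝ) + 1) := by
    intro k
    apply exists_lt_of_ciInf_lt
    rw [← htdef]
    have : (0:ℝ) < 1 / ((k : ℝ) + 1) := by positivity
    linarith
  choose xs hxs using hseq
  -- the ultrafilter
  let U : Ultrafilter ℕ := Ultrafilter.of Filter.atTop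
  have hUle : (U : Filter ℕ) ≤ Filter.atTop := Ultrafilter.of_le _
  -- pigeonhole a common v
  have hallV : {k : ℕ | vx (xs k) ∈ V} ∈ U := Filter.univ_mem' fun k => hvxmem (xs k)
  obtain ⟨v, hvV, hK⟩ := ultra_pigeon U V (fun k => vx (xs k)) hallV
  set K : Set ℕ := {k : ℕ | vx (xs k) = v} with hKdef
  set aa : ℕ → G := fun k => gx (xs k) with haadef
  set N : ℕ → ℝ := fun k => f (xs k) with hNdef
  have hNpos : ∀ k, 0 < N k := fun k => hfpos' _
  set hk : ℕ → X → ℝ := fun k y => (N k)⁻¹ * f (aa k • y) with hkdef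
  have hkFam : ∀ k, hk k ∈ Fam G f :=
    fun k => ⟨(N k)⁻¹, inv_nonneg.mpr (hNpos k).le, aa k, rfl⟩
  have hkH0 : ∀ k, H0 b c (hk k) :=
    fun k => fam_mem_h0 hb0 hbs hH hdom hharm hfpos _ (hkFam k)
  have hkq_eq : ∀ k y, hk k (q⁻¹ • y) = (N k)⁻¹ * f ((aa k * q⁻¹) • y) := by
    intro k y
    simp only [hkdef, mul_smul]
  have hkqFam : ∀ k, (fun y => hk k (q⁻¹ • y)) ∈ Fam G f := by
    intro k
    refine ⟨(N k)⁻¹, inv_nonneg.mpr (hNpos k).le, aa k * q⁻¹, ?_⟩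
    funext y; exact hkq_eq k y
  have hkqH0 : ∀ k, H0 b c (fun y => hk k (q⁻¹ • y)) :=
    fun k => fam_mem_h0 hb0 hbs hH hdom hharm hfpos _ (hkqFam k)
  have hxsK : ∀ k ∈ K, aa k • v = xs k := by
    intro k hkK
    have h1 : vx (xs k) = v := hkK
    rw [haadef, ← h1]
    exact (hxeq (xs k)).symm
  have hkv1 : ∀ k ∈ K, hk k v = 1 := by
    intro k hkK
    simp only [hkdef, hxsK k hkK]
    exact inv_mul_cancel₀ (hNpos k).ne'
  have hkratio : ∀ k y, t * hk k y ≤ hk k (q⁻¹ • y) := by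
    intro k y
    rw [hkq_eq k y, hqa (aa k) y]
    have h := htprop (aa k • y)
    calc t * hk k y = (N k)⁻¹ * (t * f (aa k • y)) := by simp only [hkdef]; ring
    _ ≤ (N k)⁻¹ * f (q⁻¹ • (aa k • y)) :=
      mul_le_mul_of_nonneg_left h (inv_nonneg.mpr (hNpos k).le)
  have hkqv : ∀ k ∈ K, hk k (q⁻¹ • v) = f (q⁻¹ • xs k) / f (xs k) := by
    intro k hkK
    rw [hkq_eq k v, hqa (aa k) v, hxsK k hkK, inv_mul_eq_div]
  -- Harnack constants from v, and ultrafilter limits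
  choose Cy hCypos hCyle using fun y : X => harnack_pair (c := c) hb0 hconn v y
  have hbnd : ∀ y : X, ∀ k ∈ K, hk k y ∈ Set.Icc (0:ℝ) (Cy y) := by
    intro y k hkK
    refine ⟨(hkH0 k).1 y, ?_⟩
    have h := hCyle y (hk k) (hkH0 k)
    rw [hkv1 k hkK, mul_one] at h
    exact h
  have hlim : ∀ y : X, ∃ L : ℝ, Filter.Tendsto (fun k => hk k y) (U : Filter ℕ) (𝓝 L) := by
    intro y
    have hmem : Set.Icc (0:ℝ) (Cy y) ∈ Ultrafilter.map (fun k => hk k y) U := by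
      rw [Ultrafilter.mem_map]
      exact Filter.mem_of_superset hK fun k hkK => hbnd y k hkK
    obtain ⟨L, _, hle⟩ := isCompact_Icc.ultrafilter_le_nhds
      (Ultrafilter.map (fun k => hk k y) U) (Filter.le_principal_iff.mpr hmem)
    refine ⟨L, ?_⟩
    rw [Filter.Tendsto, ← Ultrafilter.coe_map]
    exact hle
  choose hoo hhoo using hlim
  have hoo_nonneg : ∀ y, 0 ≤ hoo y := fun y =>
    ge_of_tendsto (hhoo y) (Filter.Eventually.of_forall fun k => (hkH0 k).1 y)
  have hoo_v : hoo v = 1 := by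
    refine tendsto_nhds_unique (hhoo v) (Filter.Tendsto.congr' ?_ tendsto_const_nhds)
    exact Filter.eventually_of_mem hK fun k hkK => (hkv1 k hkK).symm
  have hratio_tend : Filter.Tendsto (fun k => f (q⁻¹ • xs k) / f (xs k))
      Filter.atTop (𝓝 t) := by
    have hupper : Filter.Tendsto (fun k : ℕ => t + 1 / ((k:ℝ) + 1)) Filter.atTop (𝓝 t) := by
      have h0 : Filter.Tendsto (fun k : ℕ => 1 / ((k:ℝ) + 1)) Filter.atTop (𝓝 (0:ℝ)) :=
        tendsto_one_div_add_atTop_nhds_zero_nat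
      simpa using tendsto_const_nhds.add h0
    exact tendsto_of_tendsto_of_tendsto_of_le_of_le tendsto_const_nhds hupper
      (fun k => htle (xs k)) (fun k => (hxs k).le)
  have hoo_qv : hoo (q⁻¹ • v) = t := by
    refine tendsto_nhds_unique (hhoo (q⁻¹ • v))
      (Filter.Tendsto.congr' ?_ (hratio_tend.mono_left hUle))
    exact Filter.eventually_of_mem hK fun k hkK => (hkqv k hkK).symm
  -- the nonnegative superharmonic function w
  set w : X → ℝ := fun y => hoo (q⁻¹ • y) - t * hoo y with hwdef
  have hwtend : ∀ y, Filter.Tendsto (fun k => hk k (q⁻¹ • y) - t * hk k y)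
      (U : Filter ℕ) (𝓝 (w y)) := fun y =>
    (hhoo (q⁻¹ • y)).sub ((hhoo y).const_mul t)
  have hw0 : ∀ y, 0 ≤ w y := fun y =>
    ge_of_tendsto (hwtend y)
      (Filter.Eventually.of_forall fun k => sub_nonneg.mpr (hkratio k y))
  have hwv : w v = 0 := by
    simp only [hwdef, hoo_qv, hoo_v, mul_one, sub_self]
  have hwsh : ∀ x, Summable (fun y => b x y * w y) ∧
      ∑' y, b x y * w y ≤ deg b c x * w x := by
    intro x
    have hfin : ∀ F : Finset X, ∑ y ∈ F, b x y * w y ≤ deg b c x * w x := by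
      intro F
      have hA : ∀ k, ∑ y ∈ F, b x y * (hk k (q⁻¹ • y) - t * hk k y)
          ≤ deg b c x * (hk k (q⁻¹ • x) - t * hk k x) := by
        intro k
        have SA := (hkqH0 k).2 x
        have SB := (hkH0 k).2 x
        have he : (fun y => b x y * (hk k (q⁻¹ • y) - t * hk k y))
            = fun y => (b x y * hk k (q⁻¹ • y)) - t * (b x y * hk k y) :=
          funext fun y => by ring
        have hsummable : Summable (fun y => b x y * (hk k (q⁻¹ • y) - t * hk k y)) := by
          rw [he]; exact SA.1.sub (SB.1.mul_left t)
        have htsum : ∑' y, b x y * (hk k (q⁻¹ • y) - t * hk k y)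
            = deg b c x * (hk k (q⁻¹ • x) - t * hk k x) := by
          rw [he, Summable.tsum_sub SA.1 (SB.1.mul_left t), tsum_mul_left, SA.2, SB.2]; ring
        calc ∑ y ∈ F, b x y * (hk k (q⁻¹ • y) - t * hk k y)
            ≤ ∑' y, b x y * (hk k (q⁻¹ • y) - t * hk k y) :=
          Summable.sum_le_tsum F (fun i _ => mul_nonneg (hb0 x i)
            (sub_nonneg.mpr (hkratio k i))) hsummable
        _ = deg b c x * (hk k (q⁻¹ • x) - t * hk k x) := htsum
      have hl1 : Filter.Tendsto (fun k => ∑ y ∈ F, b x y * (hk k (q⁻¹ • y) - t * hk k y))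
          (U : Filter ℕ) (𝓝 (∑ y ∈ F, b x y * w y)) := by
        apply tendsto_finset_sum
        intro y _
        exact (hwtend y).const_mul (b x y)
      have hl2 : Filter.Tendsto (fun k => deg b c x * (hk k (q⁻¹ • x) - t * hk k x))
          (U : Filter ℕ) (𝓝 (deg b c x * w x)) := (hwtend x).const_mul _
      exact le_of_tendsto_of_tendsto' hl1 hl2 hA
    have hsum : Summable fun y => b x y * w y :=
      summable_of_sum_le (fun y => mul_nonneg (hb0 x y) (hw0 y)) hfin
    exact ⟨hsum, Summable.tsum_le_of_sum_le hsum hfin⟩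
  have hwzero : ∀ y, w y = 0 := propagate_zero hb0 hconn hw0 hwsh hwv
  have heig : ∀ y, hoo (q⁻¹ • y) = t * hoo y := by
    intro y
    have := hwzero y
    rw [hwdef] at this
    linarith [this]
  -- iterate the eigen-equation along powers of q
  have hpow : ∀ m : ℕ, hoo x₀ = t ^ m * hoo (q ^ m • x₀) := by
    intro m
    induction m with
    | zero => simp
    | succ m ih =>
      have hpt : q⁻¹ • (q ^ (m + 1) • x₀) = q ^ m • x₀ := by
        rw [smul_smul]
        congr 1
        group
      have hstep : hoo (q ^ m • x₀) = t * hoo (q ^ (m + 1) • x₀) := by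
        have h := heig (q ^ (m + 1) • x₀)
        rw [hpt] at h
        exact h
      rw [ih, hstep, pow_succ]
      ring
  -- transport of the word bound
  obtain ⟨D, hD1, hDb⟩ := word_bound hb0 hbs hconn hH hdom hharm hfpos x₀ gg ll
  have hπW : ∀ n : ℕ, π (q ^ (n * n)) = π ((gg ^ n)⁻¹ * (ll ^ n)⁻¹ * gg ^ n * ll ^ n) := by
    intro n
    have hrel : π q = (π gg)⁻¹ * (π ll)⁻¹ * π gg * π ll := by
      rw [hcomm]
      simp only [map_mul, map_inv]
    have hc := central_comm_pow (π gg) (π ll) (π q) hcen hrel n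
    calc π (q ^ (n * n)) = (π q) ^ (n * n) := map_pow _ _ _
    _ = ((π gg) ^ n)⁻¹ * ((π ll) ^ n)⁻¹ * (π gg) ^ n * (π ll) ^ n := hc.symm
    _ = π ((gg ^ n)⁻¹ * (ll ^ n)⁻¹ * gg ^ n * ll ^ n) := by
      simp only [map_mul, map_inv, map_pow]
  have hkW : ∀ (k : ℕ) (n : ℕ), hk k (q ^ (n * n) • x₀)
      = hk k (((gg ^ n)⁻¹ * (ll ^ n)⁻¹ * gg ^ n * ll ^ n) • x₀) := by
    intro k n
    simp only [hkdef, ← mul_smul]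
    have hπ2 : π (aa k * q ^ (n * n)) = π (aa k * ((gg ^ n)⁻¹ * (ll ^ n)⁻¹ * gg ^ n * ll ^ n)) := by
      rw [map_mul, map_mul, hπW n]
    rw [htrans _ _ hπ2 x₀]
  have hstar1 : ∀ n : ℕ, hoo (q ^ (n * n) • x₀) ≤ D ^ n * hoo x₀ := by
    intro n
    refine le_of_tendsto_of_tendsto' (hhoo _) ((hhoo x₀).const_mul _) fun k => ?_
    rw [hkW k n]
    exact (hDb n (hk k) (hkFam k)).1
  have hstar2 : ∀ n : ℕ, hoo x₀ ≤ D ^ n * hoo (q ^ (n * n) • x₀) := by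
    intro n
    refine le_of_tendsto_of_tendsto' (hhoo x₀) ((hhoo _).const_mul _) fun k => ?_
    have h := (hDb n (hk k) (hkFam k)).2
    rwa [← hkW k n] at h
  -- positivity of hoo x₀
  obtain ⟨C₀, hC₀pos, hC₀le⟩ := harnack_pair (c := c) hb0 hconn x₀ v
  have hoo_x₀_pos : 0 < hoo x₀ := by
    have hlow : ∀ k ∈ K, C₀⁻¹ ≤ hk k x₀ := by
      intro k hkK
      have h := hC₀le (hk k) (hkH0 k)
      rw [hkv1 k hkK] at h
      have h2 : C₀⁻¹ * 1 ≤ C₀⁻¹ * (C₀ * hk k x₀) :=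
        mul_le_mul_of_nonneg_left h (inv_nonneg.mpr hC₀pos.le)
      simpa [inv_mul_cancel_left₀ hC₀pos.ne'] using h2
    exact lt_of_lt_of_le (inv_pos.mpr hC₀pos)
      (ge_of_tendsto (hhoo x₀) (Filter.eventually_of_mem hK hlow))
  -- the two families of inequalities
  have hineq : ∀ n : ℕ, t ^ (n * n) ≤ D ^ n ∧ 1 ≤ t ^ (n * n) * D ^ n := by
    intro n
    have hT : (0:ℝ) < t ^ (n * n) := pow_pos htpos _
    have he1 : t ^ (n * n) * hoo (q ^ (n * n) • x₀) = hoo x₀ := (hpow (n * n)).symm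
    constructor
    · have h := hstar2 n
      have h2 : t ^ (n * n) * hoo x₀ ≤ t ^ (n * n) * (D ^ n * hoo (q ^ (n * n) • x₀)) :=
        mul_le_mul_of_nonneg_left h hT.le
      have h3 : t ^ (n * n) * (D ^ n * hoo (q ^ (n * n) • x₀))
          = D ^ n * (t ^ (n * n) * hoo (q ^ (n * n) • x₀)) := by ring
      rw [h3, he1] at h2
      have h4 : t ^ (n * n) * hoo x₀ ≤ D ^ n * hoo x₀ := h2
      exact le_of_mul_le_mul_right h4 hoo_x₀_pos
    · have h := hstar1 n
      have h2 : t ^ (n * n) * hoo (q ^ (n * n) • x₀) ≤ t ^ (n * n) * (D ^ n * hoo x₀) :=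
        mul_le_mul_of_nonneg_left h hT.le
      rw [he1] at h2
      have h3 : t ^ (n * n) * (D ^ n * hoo x₀) = t ^ (n * n) * D ^ n * hoo x₀ := by ring
      rw [h3] at h2
      have h4 : 1 * hoo x₀ ≤ t ^ (n * n) * D ^ n * hoo x₀ := by
        rw [one_mul]; exact h2
      exact le_of_mul_le_mul_right h4 hoo_x₀_pos
  have ht1 : t = 1 := t_eq_one htpos hD1 (fun n => (hineq n).1) (fun n => (hineq n).2)
  intro x
  have h := htprop x
  rwa [ht1, one_mul] at h



end KeyLemma



/-- If `q ∈ Q(R)` is a commutator, then every harmonic `f ∈ 𝓚^R`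
is invariant under the shift by `q`. -/
theorem commutator_in_Qsub_invariant {X : Type*} [Countable X] {G : Type*} [Group G]
    [MulAction G X] (b : X → X → ℝ) (c : X → ℝ)
    (hb0 : ∀ x y, 0 ≤ b x y) (hbd : ∀ x, b x x = 0) (hbs : ∀ x, Summable (b x))
    (hconn : Connected b) (hcocpt : CocompactAction G X)
    (hH : HInvOn b c (Set.univ : Set G)) (x₀ : X)
    (R : Subgroup G) [R.Normal]
    (q : G) (hq : q ∈ Qsub R) (g l : G) (hcomm : q = g⁻¹ * l⁻¹ * g * l)
    (f : X → ℝ) (hf : f ∈ KsetR b c x₀ (R : Set G))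
    (hdom : InDom b f) (hharm : schrodinger b c f = 0) :
    shift q f = f := by
  have hfK : f ∈ Kset b c x₀ := hf.1
  have hfR : ∀ ρ ∈ R, shift ρ f = f := fun ρ hρ => hf.2 ρ hρ
  have hfpos : ∀ x, 0 ≤ f x := by
    intro x
    have hcl : Kset b c x₀ ⊆ {φ : X → ℝ | 0 ≤ φ x} := by
      apply closure_minimal
      · intro φ hφ
        exact hφ.1.2.2.1 x
      · exact isClosed_le continuous_const (continuous_apply x)
    exact hcl hfK
  have hf1 : f x₀ = 1 := by
    have hcl : Kset b c x₀ ⊆ {φ : X → ℝ | φ x₀ = 1} := by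
      apply closure_minimal
      · intro φ hφ
        exact hφ.2
      · exact isClosed_eq (continuous_apply x₀) continuous_const
    exact hcl hfK
  have h1 : ∀ x : X, f x ≤ f (q⁻¹ • x) :=
    key_ineq hb0 hbs hconn hcocpt hH x₀ R hdom hharm hfpos hf1 hfR hq hcomm
  have hq' : q⁻¹ ∈ Qsub R := inv_mem hq
  have hcomm' : q⁻¹ = l⁻¹ * g⁻¹ * l * g := by rw [hcomm]; group
  have h2 : ∀ x : X, f x ≤ f ((q⁻¹)⁻¹ • x) :=
    key_ineq hb0 hbs hconn hcocpt hH x₀ R hdom hharm hfpos hf1 hfR hq' hcomm'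
  funext x
  have ha : f (q⁻¹ • x) ≤ f x := by
    have h := h2 (q⁻¹ • x)
    rw [inv_inv, smul_smul, mul_inv_cancel, one_smul] at h
    exact h
  exact le_antisymm ha (h1 x)

end GraphPaper
end
end

section
/- (Margulis' theorem for group actions, part (a)) Let (b,c) be a connected graph over X with a nilpotent group G acting cocompactly on X such that H_{b,c} is G-invariant, and fix x₀ ∈ X. Then every element of 𝓚 is [G,G]-invariant, where [G,G] is the commutator subgroup of G. -/
open MeasureTheory
open scoped BigOperators

noncomputable section

namespace GraphPaper

variable {X : Type*}

variable {G : Type*} [Group G] [MulAction G X]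

/-! ### Auxiliary definitions -/

open scoped commutatorElement

def Sset (b : X → X → ℝ) (c : X → ℝ) (x₀ : X) : Set (X → ℝ) :=
  {f : X → ℝ | f ∈ Hplus b c ∧ f x₀ = 1}

lemma Kset_eq_closure_Sset (b : X → X → ℝ) (c : X → ℝ) (x₀ : X) :
    Kset b c x₀ = closure (Sset b c x₀) := rfl

/-! ### shift basics -/

lemma shift_apply (g : G) (f : X → ℝ) (x : X) : shift g f x = f (g⁻¹ • x) := rfl

lemma shift_one (f : X → ℝ) : shift (1 : G) f = f := by
  funext x; simp [shift]

lemma shift_mul (g h : G) (f : X → ℝ) : shift (g * h) f = shift g (shift h f) := by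
  funext x; simp [shift, mul_smul]

lemma shift_smul (g : G) (r : ℝ) (f : X → ℝ) : shift g (r • f) = r • shift g f := rfl

lemma continuous_shift (g : G) : Continuous fun f : X → ℝ => shift g f := by
  apply continuous_pi
  intro x
  exact continuous_apply _

/-! ### Summability and harmonic sum identity -/

lemma summable_bf {b : X → X → ℝ} {c : X → ℝ} {f : X → ℝ} (hf : InDom b f)
    (hfpos : ∀ z, 0 ≤ f z) (x : X) : Summable fun y => b x y * f y := by
  have := hf x
  refine this.congr fun y => ?_
  rw [abs_of_nonneg (hfpos y)]

lemma summable_bdiff {b : X → X → ℝ} {c : X → ℝ} {f : X → ℝ} (hbs : ∀ x, Summable (b x))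
    (hf : InDom b f) (hfpos : ∀ z, 0 ≤ f z) (x : X) :
    Summable fun y => b x y * (f x - f y) := by
  have h1 : Summable fun y => f x * b x y := (hbs x).mul_left _
  have h2 := summable_bf (c := c) hf hfpos x
  refine (h1.sub h2).congr fun y => ?_
  ring

lemma harmonic_sum_eq {b : X → X → ℝ} {c : X → ℝ} {f : X → ℝ} (hbs : ∀ x, Summable (b x))
    (hf : f ∈ Hplus b c) (x : X) :
    ∑' y, b x y * f y = deg b c x * f x := by
  obtain ⟨hdom, hharm, hpos, -⟩ := hf
  have h0 : (∑' y, b x y * (f x - f y)) + c x * f x = 0 := congrFun hharm x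
  have h1 : Summable fun y => f x * b x y := (hbs x).mul_left _
  have h2 := summable_bf (c := c) hdom hpos x
  have h3 : (∑' y, b x y * (f x - f y)) = f x * (∑' y, b x y) - ∑' y, b x y * f y := by
    rw [← tsum_mul_left, ← Summable.tsum_sub h1 h2]
    exact tsum_congr fun y => by ring
  rw [h3] at h0
  unfold deg
  linarith

/-! ### Harnack -/

lemma edge_harnack {b : X → X → ℝ} {c : X → ℝ} {f : X → ℝ} (hb0 : ∀ x y, 0 ≤ b x y)
    (hbs : ∀ x, Summable (b x)) (hf : f ∈ Hplus b c) {x y : X} (hxy : 0 < b x y) :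
    f y ≤ max (deg b c x / b x y) 1 * f x := by
  have hdom := hf.1
  have hpos := hf.2.2.1
  have hsum := harmonic_sum_eq hbs hf x
  have h2 := summable_bf (c := c) hdom hpos x
  have hterm : b x y * f y ≤ ∑' z, b x z * f z :=
    Summable.le_tsum h2 y fun z _ => mul_nonneg (hb0 x z) (hpos z)
  rcases le_or_gt (f x) 0 with hfx | hfx
  · have hfx0 : f x = 0 := le_antisymm hfx (hpos x)
    have h3 : b x y * f y ≤ 0 := by rw [hsum, hfx0] at hterm; linarith
    have hfy : f y = 0 := by nlinarith [hpos y, hxy]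
    rw [hfy, hfx0]; ring_nf; positivity
  · rcases le_or_gt (deg b c x) 0 with hdeg | hdeg
    · -- sum of nonneg terms is ≤ 0, so each term is 0
      have : b x y * f y ≤ 0 := by
        rw [hsum] at hterm
        nlinarith
      have hfy : f y = 0 := by nlinarith [hpos y]
      rw [hfy]
      have : 0 ≤ max (deg b c x / b x y) 1 * f x := by
        apply mul_nonneg (le_trans zero_le_one (le_max_right _ _)) (hpos x)
      linarith
    · have : f y ≤ deg b c x / b x y * f x := by
        rw [div_mul_eq_mul_div, le_div_iff₀ hxy]
        rw [hsum] at hterm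
        nlinarith
      calc f y ≤ deg b c x / b x y * f x := this
        _ ≤ max (deg b c x / b x y) 1 * f x := by
            apply mul_le_mul_of_nonneg_right (le_max_left _ _) (hpos x)

lemma exists_harnack {b : X → X → ℝ} {c : X → ℝ} (hb0 : ∀ x y, 0 ≤ b x y)
    (hbs : ∀ x, Summable (b x)) (hconn : Connected b) (x y : X) :
    ∃ C : ℝ, 0 < C ∧ ∀ f ∈ Hplus b c, f y ≤ C * f x := by
  have h := hconn x y
  induction h with
  | refl => exact ⟨1, one_pos, fun f hf => by rw [one_mul]⟩
  | @tail u v hrtg hbc ih =>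
    obtain ⟨C, hC, hCf⟩ := ih
    refine ⟨max (deg b c u / b u v) 1 * C, ?_, fun f hf => ?_⟩
    · exact mul_pos (lt_of_lt_of_le one_pos (le_max_right _ _)) hC
    · calc f v ≤ max (deg b c u / b u v) 1 * f u := edge_harnack hb0 hbs hf hbc
        _ ≤ max (deg b c u / b u v) 1 * (C * f x) := by
            apply mul_le_mul_of_nonneg_left (hCf f hf)
              (le_trans zero_le_one (le_max_right _ _))
        _ = max (deg b c u / b u v) 1 * C * f x := by ring



/-! ### Kset basics -/

lemma Kset_subset_harnack {b : X → X → ℝ} {c : X → ℝ} {x₀ : X} {x y : X} {C : ℝ}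
    (hC : ∀ f ∈ Hplus b c, f y ≤ C * f x) :
    ∀ f ∈ Kset b c x₀, f y ≤ C * f x := by
  intro f hf
  have hcl : IsClosed {f : X → ℝ | f y ≤ C * f x} :=
    isClosed_le (continuous_apply y) ((continuous_apply x).const_smul C)
  have hsub : Sset b c x₀ ⊆ {f : X → ℝ | f y ≤ C * f x} := fun g hg => hC g hg.1
  exact (closure_minimal hsub hcl) hf

lemma exists_Kharnack {b : X → X → ℝ} {c : X → ℝ} (hb0 : ∀ x y, 0 ≤ b x y)
    (hbs : ∀ x, Summable (b x)) (hconn : Connected b) (x₀ : X) :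
    ∃ Cst : X → X → ℝ, ∀ x y, 0 < Cst x y ∧ ∀ f ∈ Kset b c x₀, f y ≤ Cst x y * f x := by
  have h : ∀ x y : X, ∃ C : ℝ, 0 < C ∧ ∀ f ∈ Kset b c x₀, f y ≤ C * f x := by
    intro x y
    obtain ⟨C, hC, hCf⟩ := exists_harnack (c := c) hb0 hbs hconn x y
    exact ⟨C, hC, Kset_subset_harnack hCf⟩
  choose Cst h1 h2 using h
  exact ⟨Cst, fun x y => ⟨h1 x y, h2 x y⟩⟩

lemma Kset_nonneg {b : X → X → ℝ} {c : X → ℝ} {x₀ : X} :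
    ∀ f ∈ Kset b c x₀, ∀ x, 0 ≤ f x := by
  intro f hf x
  have hcl : IsClosed {f : X → ℝ | 0 ≤ f x} := isClosed_le continuous_const (continuous_apply x)
  have hsub : Sset b c x₀ ⊆ {f : X → ℝ | 0 ≤ f x} := fun g hg => hg.1.2.2.1 x
  exact (closure_minimal hsub hcl) hf

lemma Kset_at_base {b : X → X → ℝ} {c : X → ℝ} {x₀ : X} :
    ∀ f ∈ Kset b c x₀, f x₀ = 1 := by
  intro f hf
  have hcl : IsClosed {f : X → ℝ | f x₀ = 1} := isClosed_eq (continuous_apply x₀) continuous_const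
  have hsub : Sset b c x₀ ⊆ {f : X → ℝ | f x₀ = 1} := fun g hg => hg.2
  exact (closure_minimal hsub hcl) hf

section WithC

variable {b : X → X → ℝ} {c : X → ℝ} {x₀ : X} {Cst : X → X → ℝ}

lemma Kset_pos (hC : ∀ x y, 0 < Cst x y ∧ ∀ f ∈ Kset b c x₀, f y ≤ Cst x y * f x) :
    ∀ f ∈ Kset b c x₀, ∀ x, 0 < f x := by
  intro f hf x
  have h1 : f x₀ ≤ Cst x x₀ * f x := (hC x x₀).2 f hf
  rw [Kset_at_base f hf] at h1
  nlinarith [(hC x x₀).1, Kset_nonneg f hf x]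

lemma Kset_le (hC : ∀ x y, 0 < Cst x y ∧ ∀ f ∈ Kset b c x₀, f y ≤ Cst x y * f x) :
    ∀ f ∈ Kset b c x₀, ∀ x, f x ≤ Cst x₀ x := by
  intro f hf x
  have h1 : f x ≤ Cst x₀ x * f x₀ := (hC x₀ x).2 f hf
  rw [Kset_at_base f hf] at h1
  linarith

lemma Kset_isCompact (hC : ∀ x y, 0 < Cst x y ∧ ∀ f ∈ Kset b c x₀, f y ≤ Cst x y * f x) :
    IsCompact (Kset b c x₀) := by
  apply IsCompact.of_isClosed_subset
    (isCompact_univ_pi (fun x => isCompact_Icc (a := (0:ℝ)) (b := Cst x₀ x)))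
    isClosed_closure
  intro f hf
  rw [Set.mem_univ_pi]
  exact fun x => ⟨Kset_nonneg f hf x, Kset_le hC f hf x⟩

omit [Group G] [MulAction G X] in
lemma summable_bf' (hb0 : ∀ x y, 0 ≤ b x y) {f : X → ℝ} (hf : InDom b f) (x : X) :
    Summable fun y => b x y * f y := by
  apply Summable.of_abs
  refine (hf x).congr fun y => ?_
  rw [abs_mul, abs_of_nonneg (hb0 x y)]

omit [Group G] [MulAction G X] in
lemma summable_bdiff' (hb0 : ∀ x y, 0 ≤ b x y) (hbs : ∀ x, Summable (b x)) {f : X → ℝ}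
    (hf : InDom b f) (x : X) : Summable fun y => b x y * (f x - f y) := by
  have h1 : Summable fun y => f x * b x y := (hbs x).mul_left _
  refine (h1.sub (summable_bf' hb0 hf x)).congr fun y => ?_
  ring

omit [Group G] [MulAction G X] in
lemma InDom.combo (hb0 : ∀ x y, 0 ≤ b x y) {f g : X → ℝ} (hf : InDom b f) (hg : InDom b g)
    (s t : ℝ) : InDom b (s • f + t • g) := by
  intro x
  have h1 : Summable fun y => |s| * (b x y * |f y|) + |t| * (b x y * |g y|) :=
    ((hf x).mul_left _).add ((hg x).mul_left _)
  apply Summable.of_nonneg_of_le (fun y => ?_) (fun y => ?_) h1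
  · exact mul_nonneg (hb0 x y) (abs_nonneg _)
  · have habs : |s * f y + t * g y| ≤ |s| * |f y| + |t| * |g y| := by
      calc |s * f y + t * g y| ≤ |s * f y| + |t * g y| := abs_add_le _ _
        _ = |s| * |f y| + |t| * |g y| := by rw [abs_mul, abs_mul]
    calc b x y * |(s • f + t • g) y| = b x y * |s * f y + t * g y| := rfl
      _ ≤ b x y * (|s| * |f y| + |t| * |g y|) :=
          mul_le_mul_of_nonneg_left habs (hb0 x y)
      _ = |s| * (b x y * |f y|) + |t| * (b x y * |g y|) := by ring

omit [Group G] [MulAction G X] in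
lemma schrodinger_combo {c : X → ℝ} (hb0 : ∀ x y, 0 ≤ b x y) (hbs : ∀ x, Summable (b x))
    {f g : X → ℝ} (hf : InDom b f) (hg : InDom b g) (s t : ℝ) :
    schrodinger b c (s • f + t • g) = s • schrodinger b c f + t • schrodinger b c g := by
  funext x
  have h1 := summable_bdiff' hb0 hbs hf x
  have h2 := summable_bdiff' hb0 hbs hg x
  have h3 : (∑' y, b x y * ((s • f + t • g) x - (s • f + t • g) y))
      = s * (∑' y, b x y * (f x - f y)) + t * (∑' y, b x y * (g x - g y)) := by
    rw [← tsum_mul_left, ← tsum_mul_left, ← Summable.tsum_add (h1.mul_left s) (h2.mul_left t)]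
    refine tsum_congr fun y => ?_
    show b x y * ((s * f x + t * g x) - (s * f y + t * g y)) = _
    ring
  show (∑' y, b x y * ((s • f + t • g) x - (s • f + t • g) y)) + c x * (s * f x + t * g x)
      = s * ((∑' y, b x y * (f x - f y)) + c x * f x)
        + t * ((∑' y, b x y * (g x - g y)) + c x * g x)
  rw [h3]; ring

omit [Group G] [MulAction G X] in
lemma Hplus_combo {c : X → ℝ} (hb0 : ∀ x y, 0 ≤ b x y) (hbs : ∀ x, Summable (b x))
    {f g : X → ℝ} (hf : f ∈ Hplus b c) (hg : g ∈ Hplus b c) {s t : ℝ}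
    (hpos : ∀ x, 0 ≤ s * f x + t * g x) (hne : ∃ x, s * f x + t * g x ≠ 0) :
    s • f + t • g ∈ Hplus b c := by
  refine ⟨InDom.combo hb0 hf.1 hg.1 s t, ?_, hpos, ?_⟩
  · rw [schrodinger_combo hb0 hbs hf.1 hg.1 s t, hf.2.1, hg.2.1]
    funext x; show s * 0 + t * 0 = 0; ring
  · obtain ⟨x, hx⟩ := hne
    intro h0
    exact hx (congrFun h0 x)

omit [Group G] [MulAction G X] in
lemma Sset_convex {c : X → ℝ} {x₀ : X} (hb0 : ∀ x y, 0 ≤ b x y) (hbs : ∀ x, Summable (b x)) :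
    Convex ℝ (Sset b c x₀) := by
  intro f hf g hg s t hs ht hst
  have h1 : s • f + t • g ∈ Hplus b c := by
    refine Hplus_combo hb0 hbs hf.1 hg.1 (fun x => ?_) ⟨x₀, ?_⟩
    · have := hf.1.2.2.1 x; have := hg.1.2.2.1 x; positivity
    · rw [hf.2, hg.2]; simp [hst]
  refine ⟨h1, ?_⟩
  show s * f x₀ + t * g x₀ = 1
  rw [hf.2, hg.2]; simp [hst]

omit [Group G] [MulAction G X] in
lemma Kset_convex {c : X → ℝ} {x₀ : X} (hb0 : ∀ x y, 0 ≤ b x y) (hbs : ∀ x, Summable (b x)) :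
    Convex ℝ (Kset b c x₀) :=
  (Sset_convex hb0 hbs).closure

/-! ### shifts preserve Hplus -/

lemma Hplus_shift {c : X → ℝ} (hH : HInvOn b c (Set.univ : Set G)) {f : X → ℝ}
    (hf : f ∈ Hplus b c) (g : G) : shift g f ∈ Hplus b c := by
  obtain ⟨hdom, hsch⟩ := hH g (Set.mem_univ g) f hf.1
  refine ⟨hdom, ?_, fun x => hf.2.2.1 _, ?_⟩
  · rw [hsch, hf.2.1]
    funext x; rfl
  · obtain ⟨y, hy⟩ := Function.ne_iff.1 hf.2.2.2
    apply Function.ne_iff.2 ⟨g • y, ?_⟩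
    show f (g⁻¹ • g • y) ≠ 0
    rw [inv_smul_smul]
    exact hy

omit [Group G] [MulAction G X] in
lemma Hplus_smul {c : X → ℝ} (hb0 : ∀ x y, 0 ≤ b x y) (hbs : ∀ x, Summable (b x))
    {f : X → ℝ} (hf : f ∈ Hplus b c) {r : ℝ} (hr : 0 < r) : r • f ∈ Hplus b c := by
  refine ⟨?_, ?_, ?_, ?_⟩
  · intro x
    refine ((hf.1 x).mul_left |r|).congr fun y => ?_
    show |r| * (b x y * |f y|) = b x y * |r * f y|
    rw [abs_mul]; ring
  · funext x
    show (∑' y, b x y * (r * f x - r * f y)) + c x * (r * f x) = 0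
    have h1 : (∑' y, b x y * (r * f x - r * f y)) = r * ∑' y, b x y * (f x - f y) := by
      rw [← tsum_mul_left]
      exact tsum_congr fun y => by ring
    have h2 : (∑' y, b x y * (f x - f y)) + c x * f x = 0 := congrFun hf.2.1 x
    rw [h1]; nlinarith [h2]
  · intro x
    exact mul_nonneg hr.le (hf.2.2.1 x)
  · obtain ⟨y, hy⟩ := Function.ne_iff.1 hf.2.2.2
    refine Function.ne_iff.2 ⟨y, ?_⟩
    show r * f y ≠ 0
    exact mul_ne_zero (ne_of_gt hr) hy

omit [Group G] [MulAction G X] in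
lemma Sset_normalize {c : X → ℝ} {x₀ : X} (hb0 : ∀ x y, 0 ≤ b x y)
    (hbs : ∀ x, Summable (b x)) {f : X → ℝ} (hf : f ∈ Hplus b c) (hfx₀ : 0 < f x₀) :
    (f x₀)⁻¹ • f ∈ Sset b c x₀ := by
  refine ⟨Hplus_smul hb0 hbs hf (inv_pos.2 hfx₀), ?_⟩
  show (f x₀)⁻¹ * f x₀ = 1
  field_simp

/-! ### the strip lemma : normalized translates stay in Kset -/

lemma Kset_strip {c : X → ℝ} {x₀ : X} [Countable X] (hb0 : ∀ x y, 0 ≤ b x y)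
    (hbs : ∀ x, Summable (b x)) (hconn : Connected b)
    (hH : HInvOn b c (Set.univ : Set G)) {u : X → ℝ} (hu : u ∈ Kset b c x₀) (a : G) :
    (fun x => (u (a • x₀))⁻¹ * u (a • x)) ∈ Kset b c x₀ := by
  obtain ⟨Cst, hC⟩ := exists_Kharnack (c := c) hb0 hbs hconn x₀
  have hpos := Kset_pos hC
  obtain ⟨fn, hfn, hlim⟩ := mem_closure_iff_seq_limit.1 hu
  have hfnK : ∀ n, fn n ∈ Kset b c x₀ := fun n => subset_closure (hfn n)
  have hfnpos : ∀ n, 0 < fn n (a • x₀) := fun n => hpos _ (hfnK n) _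
  have hupos : 0 < u (a • x₀) := hpos u hu _
  set g : ℕ → X → ℝ := fun n => (fn n (a • x₀))⁻¹ • shift a⁻¹ (fn n) with hg
  have hgS : ∀ n, g n ∈ Sset b c x₀ := by
    intro n
    have h1 : shift a⁻¹ (fn n) ∈ Hplus b c := Hplus_shift hH (hfn n).1 a⁻¹
    have h2 : shift a⁻¹ (fn n) x₀ = fn n (a • x₀) := by
      show fn n (a⁻¹⁻¹ • x₀) = fn n (a • x₀); rw [inv_inv]
    have := Sset_normalize hb0 hbs h1 (x₀ := x₀) (by rw [h2]; exact hfnpos n)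
    rwa [h2] at this
  have htend : Filter.Tendsto g Filter.atTop (nhds fun x => (u (a • x₀))⁻¹ * u (a • x)) := by
    rw [tendsto_pi_nhds]
    intro x
    have h1 : Filter.Tendsto (fun n => fn n (a • x)) Filter.atTop (nhds (u (a • x))) :=
      (tendsto_pi_nhds.1 hlim) (a • x)
    have h2 : Filter.Tendsto (fun n => fn n (a • x₀)) Filter.atTop (nhds (u (a • x₀))) :=
      (tendsto_pi_nhds.1 hlim) (a • x₀)
    have h3 : Filter.Tendsto (fun n => (fn n (a • x₀))⁻¹ * fn n (a • x)) Filter.atTop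
        (nhds ((u (a • x₀))⁻¹ * u (a • x))) :=
      Filter.Tendsto.mul (h2.inv₀ (ne_of_gt hupos)) h1
    refine h3.congr fun n => ?_
    show (fn n (a • x₀))⁻¹ * fn n (a • x) = (fn n (a • x₀))⁻¹ * fn n (a⁻¹⁻¹ • x)
    rw [inv_inv]
  exact mem_closure_of_tendsto htend (Filter.Eventually.of_forall hgS)

lemma Kset_strip' {c : X → ℝ} {x₀ : X} [Countable X] (hb0 : ∀ x y, 0 ≤ b x y)
    (hbs : ∀ x, Summable (b x)) (hconn : Connected b)
    (hH : HInvOn b c (Set.univ : Set G)) {u : X → ℝ} (hu : u ∈ Kset b c x₀) (a : G) :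
    ∃ v ∈ Kset b c x₀, ∀ x, u (a • x) = u (a • x₀) * v x := by
  obtain ⟨Cst, hC⟩ := exists_Kharnack (c := c) hb0 hbs hconn x₀
  have hupos : 0 < u (a • x₀) := Kset_pos hC u hu _
  refine ⟨_, Kset_strip hb0 hbs hconn hH hu a, fun x => ?_⟩
  field_simp

/-! ### Uniform Harnack for quotient-central elements -/

lemma unif_harnack {c : X → ℝ} {x₀ : X} [Countable X] (hb0 : ∀ x y, 0 ≤ b x y)
    (hbs : ∀ x, Summable (b x)) (hconn : Connected b) (hcocpt : CocompactAction G X)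
    (hH : HInvOn b c (Set.univ : Set G)) {N : Subgroup G} [N.Normal]
    (hN : ∀ u ∈ Kset b c x₀, ∀ ν ∈ N, shift ν u = u) {z : G}
    (hzc : (z : G ⧸ N) ∈ Subgroup.center (G ⧸ N)) :
    ∃ D : ℝ, 0 < D ∧ ∀ f ∈ Kset b c x₀, ∀ x, f (z⁻¹ • x) ≤ D * f x := by
  obtain ⟨Cst, hC⟩ := exists_Kharnack (c := c) hb0 hbs hconn x₀
  obtain ⟨V, hV⟩ := hcocpt
  obtain ⟨g0, v0, hv0, -⟩ := hV x₀
  have hVne : V.Nonempty := ⟨v0, hv0⟩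
  set D : ℝ := V.sup' hVne fun v => Cst v (z⁻¹ • v) with hD
  have hDle : ∀ v ∈ V, Cst v (z⁻¹ • v) ≤ D :=
    fun v hv => Finset.le_sup' (fun v => Cst v (z⁻¹ • v)) hv
  have hDpos : 0 < D := lt_of_lt_of_le (hC v0 (z⁻¹ • v0)).1 (hDle v0 hv0)
  refine ⟨D, hDpos, fun f hf x => ?_⟩
  obtain ⟨h, v, hvV, hxv⟩ := hV x
  -- the commutator correction
  set ν : G := z * h⁻¹ * z⁻¹ * h with hν
  have hνN : ν ∈ N := by
    rw [← QuotientGroup.eq_one_iff]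
    have hcomm : ((h : G ⧸ N))⁻¹ * (z : G ⧸ N) = (z : G ⧸ N) * ((h : G ⧸ N))⁻¹ := by
      have := Subgroup.mem_center_iff.1 hzc (((h : G)⁻¹ : G) : G ⧸ N)
      rwa [QuotientGroup.mk_inv] at this
    show ((z * h⁻¹ * z⁻¹ * h : G) : G ⧸ N) = 1
    rw [QuotientGroup.mk_mul, QuotientGroup.mk_mul, QuotientGroup.mk_mul,
      QuotientGroup.mk_inv, QuotientGroup.mk_inv, ← hcomm]
    group
  have hdec : z⁻¹ * h = h * (z⁻¹ * ν) := by
    rw [hν]; group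
  obtain ⟨w, hwK, hw⟩ := Kset_strip' hb0 hbs hconn hH hf h
  set ν' : G := z⁻¹ * ν * z with hν'
  have hν'N : ν' ∈ N := by
    have := Subgroup.Normal.conj_mem ‹N.Normal› ν hνN z⁻¹
    simpa [hν', mul_assoc] using this
  have hwinv : ∀ y, w (ν' • y) = w y := by
    intro y
    have h2 := congrFun (hN w hwK ν'⁻¹ (inv_mem hν'N)) y
    have h3 : shift ν'⁻¹ w y = w (ν' • y) := by
      show w (ν'⁻¹⁻¹ • y) = w (ν' • y); rw [inv_inv]
    rw [← h3]; exact h2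
  have key : f (z⁻¹ • x) = f (h • x₀) * w (z⁻¹ • v) := by
    have e1 : z⁻¹ • x = h • ((z⁻¹ * ν) • v) := by
      simp only [hxv, smul_smul]
      rw [hdec]
    have e2 : (z⁻¹ * ν) • v = ν' • (z⁻¹ • v) := by
      rw [smul_smul, hν']; congr 1; group
    rw [e1, hw ((z⁻¹ * ν) • v), e2, hwinv]
  have hbound : w (z⁻¹ • v) ≤ D * w v := by
    calc w (z⁻¹ • v) ≤ Cst v (z⁻¹ • v) * w v := (hC v (z⁻¹ • v)).2 w hwK
      _ ≤ D * w v := by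
          apply mul_le_mul_of_nonneg_right (hDle v hvV) (Kset_nonneg w hwK v)
  have hfx : f x = f (h • x₀) * w v := by rw [hxv]; exact hw v
  have hfh0 : 0 ≤ f (h • x₀) := Kset_nonneg f hf _
  calc f (z⁻¹ • x) = f (h • x₀) * w (z⁻¹ • v) := key
    _ ≤ f (h • x₀) * (D * w v) := mul_le_mul_of_nonneg_left hbound hfh0
    _ = D * (f (h • x₀) * w v) := by ring
    _ = D * f x := by rw [hfx]

/-! ### Extreme points are eigenfunctions of quotient-central shifts -/

lemma extreme_eigen {c : X → ℝ} {x₀ : X} [Countable X] (hb0 : ∀ x y, 0 ≤ b x y)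
    (hbs : ∀ x, Summable (b x)) (hconn : Connected b) (hcocpt : CocompactAction G X)
    (hH : HInvOn b c (Set.univ : Set G)) {N : Subgroup G} [N.Normal]
    (hN : ∀ u ∈ Kset b c x₀, ∀ ν ∈ N, shift ν u = u) {z : G}
    (hzc : (z : G ⧸ N) ∈ Subgroup.center (G ⧸ N))
    {u : X → ℝ} (hu : u ∈ Set.extremePoints ℝ (Kset b c x₀)) :
    ∀ x, u (z⁻¹ • x) = u (z⁻¹ • x₀) * u x := by
  obtain ⟨Cst, hC⟩ := exists_Kharnack (c := c) hb0 hbs hconn x₀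
  obtain ⟨D, hDpos, hD⟩ := unif_harnack hb0 hbs hconn hcocpt hH hN hzc
  have huK : u ∈ Kset b c x₀ := hu.1
  set γ : ℝ := u (z⁻¹ • x₀) with hγdef
  have hγpos : 0 < γ := Kset_pos hC u huK _
  have hγle : γ ≤ D := by
    have := hD u huK x₀
    rwa [Kset_at_base u huK, mul_one] at this
  set ε : ℝ := (2 * D)⁻¹ with hε
  have hεpos : 0 < ε := by positivity
  have hεD : ε * D = 1 / 2 := by
    rw [hε]
    rw [inv_mul_eq_div, div_eq_div_iff (by positivity) two_ne_zero]
    ring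
  have hlpos : 0 < ε * γ := by positivity
  have hllt : ε * γ < 1 := by
    have : ε * γ ≤ ε * D := by nlinarith
    rw [hεD] at this; linarith
  -- w : the normalized shift
  obtain ⟨w, hwK, hw⟩ := Kset_strip' hb0 hbs hconn hH huK z⁻¹
  have hwid : ∀ x, u (z⁻¹ • x) = γ * w x := fun x => hw x
  -- p : the complementary function
  set p : X → ℝ := fun x => (1 - ε * γ)⁻¹ * (u x - ε * u (z⁻¹ • x)) with hp
  have hpK : p ∈ Kset b c x₀ := by
    obtain ⟨fn, hfn, hlim⟩ := mem_closure_iff_seq_limit.1 huK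
    have hfnK : ∀ n, fn n ∈ Kset b c x₀ := fun n => subset_closure (hfn n)
    have hqS : ∀ n, (fun x => (1 - ε * fn n (z⁻¹ • x₀))⁻¹ * (fn n x - ε * fn n (z⁻¹ • x)))
        ∈ Sset b c x₀ := by
      intro n
      have hH1 : (1:ℝ) • fn n + (-ε) • shift z (fn n) ∈ Hplus b c := by
        refine Hplus_combo hb0 hbs (hfn n).1 (Hplus_shift hH (hfn n).1 z) (fun x => ?_)
          ⟨x₀, ?_⟩
        · have hb := hD (fn n) (hfnK n) x
          have hnn := Kset_nonneg (fn n) (hfnK n) x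
          show 0 ≤ 1 * fn n x + -ε * fn n (z⁻¹ • x)
          nlinarith
        · have hb := hD (fn n) (hfnK n) x₀
          rw [Kset_at_base (fn n) (hfnK n)] at hb
          show 1 * fn n x₀ + -ε * fn n (z⁻¹ • x₀) ≠ 0
          rw [(hfn n).2]
          nlinarith
      have hval : ((1:ℝ) • fn n + (-ε) • shift z (fn n)) x₀
          = 1 - ε * fn n (z⁻¹ • x₀) := by
        show 1 * fn n x₀ + -ε * fn n (z⁻¹ • x₀) = 1 - ε * fn n (z⁻¹ • x₀)
        rw [(hfn n).2]; ring
      have hvalpos : 0 < ((1:ℝ) • fn n + (-ε) • shift z (fn n)) x₀ := by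
        rw [hval]
        have hb := hD (fn n) (hfnK n) x₀
        rw [Kset_at_base (fn n) (hfnK n), mul_one] at hb
        nlinarith
      have := Sset_normalize hb0 hbs hH1 hvalpos
      refine Set.mem_of_eq_of_mem ?_ this
      funext x
      rw [hval]
      show (1 - ε * fn n (z⁻¹ • x₀))⁻¹ * (fn n x - ε * fn n (z⁻¹ • x))
          = (1 - ε * fn n (z⁻¹ • x₀))⁻¹ * (1 * fn n x + -ε * fn n (z⁻¹ • x))
      ring
    have htend : Filter.Tendsto
        (fun n => (fun x => (1 - ε * fn n (z⁻¹ • x₀))⁻¹ * (fn n x - ε * fn n (z⁻¹ • x))))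
        Filter.atTop (nhds p) := by
      rw [tendsto_pi_nhds]
      intro x
      have h0 : ∀ y : X, Filter.Tendsto (fun n => fn n y) Filter.atTop (nhds (u y)) :=
        fun y => (tendsto_pi_nhds.1 hlim) y
      have hden : (1 : ℝ) - ε * γ ≠ 0 := by linarith
      exact (((h0 (z⁻¹ • x₀)).const_mul ε).const_sub 1).inv₀ hden |>.mul
        ((h0 x).sub ((h0 (z⁻¹ • x)).const_mul ε))
    exact mem_closure_of_tendsto htend (Filter.Eventually.of_forall hqS)
  -- the convex combination
  have hseg : u ∈ openSegment ℝ p w := by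
    refine ⟨1 - ε * γ, ε * γ, by linarith, hlpos, by ring, ?_⟩
    funext x
    show (1 - ε * γ) * p x + (ε * γ) * w x = u x
    have hden : (1 : ℝ) - ε * γ ≠ 0 := by linarith
    have h1 : (1 - ε * γ) * p x = u x - ε * u (z⁻¹ • x) := by
      show (1 - ε * γ) * ((1 - ε * γ)⁻¹ * (u x - ε * u (z⁻¹ • x))) = _
      rw [← mul_assoc, mul_inv_cancel₀ hden, one_mul]
    have h2 : (ε * γ) * w x = ε * (γ * w x) := by ring
    rw [← hwid x] at h2
    linarith
  have hext := hu.2 hpK hwK hseg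
  have hwu : w = u := ((mem_extremePoints.1 hu).2 p hpK w hwK hseg).2
  intro x
  rw [hwid x, hwu]

/-! ### iterated translate bounds -/

section Bounds

variable {c : X → ℝ} {x₀ : X} {Cst : X → X → ℝ} [Countable X]

lemma Kup (hb0 : ∀ x y, 0 ≤ b x y) (hbs : ∀ x, Summable (b x)) (hconn : Connected b)
    (hH : HInvOn b c (Set.univ : Set G))
    (hC : ∀ x y, 0 < Cst x y ∧ ∀ f ∈ Kset b c x₀, f y ≤ Cst x y * f x)
    (a : G) (n : ℕ) (y : X) (B : ℝ) (hB : ∀ u' ∈ Kset b c x₀, u' y ≤ B) :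
    ∀ u ∈ Kset b c x₀, u (a ^ n • y) ≤ (Cst x₀ (a • x₀)) ^ n * B := by
  induction n with
  | zero => intro u hu; rw [pow_zero, pow_zero, one_smul, one_mul]; exact hB u hu
  | succ n ih =>
    intro u hu
    obtain ⟨v, hvK, hv⟩ := Kset_strip' hb0 hbs hconn hH hu a
    have e1 : a ^ (n + 1) • y = a • (a ^ n • y) := by rw [pow_succ']; rw [mul_smul]
    have h1 : u (a • x₀) ≤ Cst x₀ (a • x₀) := by
      have := (hC x₀ (a • x₀)).2 u hu
      rwa [Kset_at_base u hu, mul_one] at this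
    have h2 : v (a ^ n • y) ≤ (Cst x₀ (a • x₀)) ^ n * B := ih v hvK
    have hBnn : 0 ≤ B := le_trans (Kset_nonneg u hu y) (hB u hu)
    calc u (a ^ (n + 1) • y) = u (a • x₀) * v (a ^ n • y) := by rw [e1, hv]
      _ ≤ Cst x₀ (a • x₀) * ((Cst x₀ (a • x₀)) ^ n * B) :=
          mul_le_mul h1 h2 (Kset_nonneg v hvK _) (le_of_lt (hC x₀ (a • x₀)).1)
      _ = (Cst x₀ (a • x₀)) ^ (n + 1) * B := by ring

lemma Kdown (hb0 : ∀ x y, 0 ≤ b x y) (hbs : ∀ x, Summable (b x)) (hconn : Connected b)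
    (hH : HInvOn b c (Set.univ : Set G))
    (hC : ∀ x y, 0 < Cst x y ∧ ∀ f ∈ Kset b c x₀, f y ≤ Cst x y * f x)
    (a : G) (n : ℕ) (y : X) (B : ℝ) (hBnn : 0 ≤ B) (hB : ∀ u' ∈ Kset b c x₀, B ≤ u' y) :
    ∀ u ∈ Kset b c x₀, ((Cst (a • x₀) x₀)⁻¹) ^ n * B ≤ u (a ^ n • y) := by
  induction n with
  | zero => intro u hu; rw [pow_zero, pow_zero, one_smul, one_mul]; exact hB u hu
  | succ n ih =>
    intro u hu
    obtain ⟨v, hvK, hv⟩ := Kset_strip' hb0 hbs hconn hH hu a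
    have e1 : a ^ (n + 1) • y = a • (a ^ n • y) := by rw [pow_succ']; rw [mul_smul]
    have hCpos := (hC (a • x₀) x₀).1
    have h1 : (Cst (a • x₀) x₀)⁻¹ ≤ u (a • x₀) := by
      have h := (hC (a • x₀) x₀).2 u hu
      rw [Kset_at_base u hu] at h
      rw [inv_le_iff_one_le_mul₀ hCpos]
      calc (1:ℝ) ≤ Cst (a • x₀) x₀ * u (a • x₀) := h
        _ = u (a • x₀) * Cst (a • x₀) x₀ := by ring
    have h2 : ((Cst (a • x₀) x₀)⁻¹) ^ n * B ≤ v (a ^ n • y) := ih v hvK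
    calc ((Cst (a • x₀) x₀)⁻¹) ^ (n + 1) * B
        = (Cst (a • x₀) x₀)⁻¹ * (((Cst (a • x₀) x₀)⁻¹) ^ n * B) := by ring
      _ ≤ u (a • x₀) * v (a ^ n • y) :=
          mul_le_mul h1 h2 (by positivity) (le_trans (by positivity) h1)
      _ = u (a ^ (n + 1) • y) := by rw [e1]; exact (hv _).symm

end Bounds

/-! ### group-theoretic identity -/

lemma comm_pow_pow {H : Type*} [Group H] (a w : H)
    (hc : ∀ x : H, ⁅a, w⁆ * x = x * ⁅a, w⁆) (n : ℕ) :
    a ^ n * w ^ n = ⁅a, w⁆ ^ (n * n) * (w ^ n * a ^ n) := by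
  set z := ⁅a, w⁆ with hz
  have hcz : ∀ (m : ℕ) (x : H), z ^ m * x = x * z ^ m := by
    intro m x
    have h : Commute z x := hc x
    exact h.pow_left m
  have hab : a * w = z * (w * a) := by rw [hz]; group
  have claim1 : ∀ m : ℕ, a ^ m * w = z ^ m * (w * a ^ m) := by
    intro m
    induction m with
    | zero => simp
    | succ m ih =>
      calc a ^ (m + 1) * w = a * (a ^ m * w) := by group
        _ = a * (z ^ m * (w * a ^ m)) := by rw [ih]
        _ = (a * z ^ m) * (w * a ^ m) := by group
        _ = (z ^ m * a) * (w * a ^ m) := by rw [← hcz m a]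
        _ = z ^ m * ((a * w) * a ^ m) := by group
        _ = z ^ m * ((z * (w * a)) * a ^ m) := by rw [hab]
        _ = (z ^ m * z) * (w * (a * a ^ m)) := by group
        _ = z ^ (m + 1) * (w * a ^ (m + 1)) := by rw [pow_succ, pow_succ']
  have claim2 : ∀ m k : ℕ, a ^ m * w ^ k = z ^ (m * k) * (w ^ k * a ^ m) := by
    intro m k
    induction k with
    | zero => simp
    | succ k ih =>
      calc a ^ m * w ^ (k + 1) = (a ^ m * w ^ k) * w := by group
        _ = (z ^ (m * k) * (w ^ k * a ^ m)) * w := by rw [ih]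
        _ = z ^ (m * k) * (w ^ k * (a ^ m * w)) := by group
        _ = z ^ (m * k) * (w ^ k * (z ^ m * (w * a ^ m))) := by rw [claim1]
        _ = z ^ (m * k) * ((w ^ k * z ^ m) * (w * a ^ m)) := by group
        _ = z ^ (m * k) * ((z ^ m * w ^ k) * (w * a ^ m)) := by rw [hcz m (w ^ k)]
        _ = (z ^ (m * k) * z ^ m) * ((w ^ k * w) * a ^ m) := by group
        _ = z ^ (m * (k + 1)) * (w ^ (k + 1) * a ^ m) := by
            rw [show m * (k + 1) = m * k + m from by ring, pow_add, pow_succ]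
  exact claim2 n n

/-! ### the distortion estimate : eigenvalues of commutators are ≤ 1 -/

lemma gamma_le {c : X → ℝ} {x₀ : X} [Countable X] (hb0 : ∀ x y, 0 ≤ b x y)
    (hbs : ∀ x, Summable (b x)) (hconn : Connected b)
    (hH : HInvOn b c (Set.univ : Set G)) {N : Subgroup G} [N.Normal]
    (hN : ∀ u ∈ Kset b c x₀, ∀ ν ∈ N, shift ν u = u) {g w : G}
    (hzc : ((⁅g, w⁆ : G) : G ⧸ N) ∈ Subgroup.center (G ⧸ N))
    {u : X → ℝ} (huK : u ∈ Kset b c x₀) {γ : ℝ} (hγ : 0 < γ)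
    (heig : ∀ x, u (⁅g, w⁆⁻¹ • x) = γ * u x) : γ ≤ 1 := by
  obtain ⟨Cst, hC⟩ := exists_Kharnack (c := c) hb0 hbs hconn x₀
  set z : G := ⁅g, w⁆ with hzdef
  -- Step A : power relation
  have hpow : ∀ (m : ℕ) (x : X), u (z ^ m • x) * γ ^ m = u x := by
    intro m
    induction m with
    | zero => intro x; simp
    | succ m ih =>
      intro x
      have h1 : u (z • x) * γ = u x := by
        have h := heig (z • x)
        rw [inv_smul_smul] at h
        rw [h]; ring
      have e : z ^ (m + 1) • x = z ^ m • (z • x) := by rw [pow_succ, mul_smul]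
      calc u (z ^ (m + 1) • x) * γ ^ (m + 1)
          = (u (z ^ m • (z • x)) * γ ^ m) * γ := by rw [e, pow_succ]; ring
        _ = u (z • x) * γ := by rw [ih (z • x)]
        _ = u x := h1
  -- Step B : the quotient identity
  have hq : ∀ n : ℕ, ∃ ν ∈ N, z ^ (n * n) * (w ^ n * g ^ n) = (g ^ n * w ^ n) * ν := by
    intro n
    have hcomm_elt : ⁅(g : G ⧸ N), (w : G ⧸ N)⁆ = ((z : G) : G ⧸ N) := rfl
    have hc : ∀ x : G ⧸ N, ⁅(g : G ⧸ N), (w : G ⧸ N)⁆ * x = x * ⁅(g : G ⧸ N), (w : G ⧸ N)⁆ := by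
      intro x
      rw [hcomm_elt]
      exact (Subgroup.mem_center_iff.1 hzc x).symm
    have hid := comm_pow_pow (g : G ⧸ N) (w : G ⧸ N) hc n
    rw [hcomm_elt] at hid
    have hmk : ((g ^ n * w ^ n : G) : G ⧸ N) = ((z ^ (n * n) * (w ^ n * g ^ n) : G) : G ⧸ N) := by
      push_cast
      exact hid
    have hν := QuotientGroup.eq.1 hmk
    refine ⟨(g ^ n * w ^ n)⁻¹ * (z ^ (n * n) * (w ^ n * g ^ n)), hν, ?_⟩
    group
  -- Step C : the exact evaluation identity
  have hkey : ∀ n : ℕ, u ((w ^ n * g ^ n) • x₀) = u ((g ^ n * w ^ n) • x₀) * γ ^ (n * n) := by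
    intro n
    obtain ⟨ν, hνN, hνid⟩ := hq n
    obtain ⟨v, hvK, hv⟩ := Kset_strip' hb0 hbs hconn hH huK (g ^ n * w ^ n)
    have hvinv : v (ν • x₀) = v x₀ := by
      have h2 := congrFun (hN v hvK ν⁻¹ (inv_mem hνN)) x₀
      have h3 : shift ν⁻¹ v x₀ = v (ν • x₀) := by
        show v (ν⁻¹⁻¹ • x₀) = v (ν • x₀); rw [inv_inv]
      rw [← h3]; exact h2
    have route1 : u ((z ^ (n * n) * (w ^ n * g ^ n)) • x₀) * γ ^ (n * n)
        = u ((w ^ n * g ^ n) • x₀) := by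
      rw [mul_smul]; exact hpow (n * n) _
    have route2 : u ((z ^ (n * n) * (w ^ n * g ^ n)) • x₀) = u ((g ^ n * w ^ n) • x₀) := by
      rw [hνid, mul_smul, hv, hvinv, Kset_at_base v hvK, mul_one]
    rw [← route1, route2]
  -- Step D : Harnack bounds
  set Mw : ℝ := Cst x₀ (w • x₀) with hMw
  set Mg : ℝ := Cst x₀ (g • x₀) with hMg
  set Cg : ℝ := Cst (g • x₀) x₀ with hCg
  set Cw : ℝ := Cst (w • x₀) x₀ with hCw
  have hMwp : 0 < Mw := (hC _ _).1
  have hMgp : 0 < Mg := (hC _ _).1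
  have hCgp : 0 < Cg := (hC _ _).1
  have hCwp : 0 < Cw := (hC _ _).1
  set K : ℝ := Mw * Mg * Cg * Cw with hK
  have hKp : 0 < K := by positivity
  have hbound : ∀ n : ℕ, γ ^ (n * n) ≤ K ^ n := by
    intro n
    have hinner_up : ∀ u' ∈ Kset b c x₀, u' (g ^ n • x₀) ≤ Mg ^ n * 1 :=
      Kup hb0 hbs hconn hH hC g n x₀ 1 fun u' hu' => le_of_eq (Kset_at_base u' hu')
    have hup : u ((w ^ n * g ^ n) • x₀) ≤ Mw ^ n * (Mg ^ n * 1) := by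
      have := Kup hb0 hbs hconn hH hC w n (g ^ n • x₀) (Mg ^ n * 1) hinner_up u huK
      rwa [← mul_smul] at this
    have hinner_dn : ∀ u' ∈ Kset b c x₀, (Cw⁻¹) ^ n * 1 ≤ u' (w ^ n • x₀) :=
      Kdown hb0 hbs hconn hH hC w n x₀ 1 zero_le_one
        fun u'' hu'' => le_of_eq (Kset_at_base u'' hu'').symm
    have hdn : (Cg⁻¹) ^ n * ((Cw⁻¹) ^ n * 1) ≤ u ((g ^ n * w ^ n) • x₀) := by
      have := Kdown hb0 hbs hconn hH hC g n (w ^ n • x₀) ((Cw⁻¹) ^ n * 1)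
        (by positivity) hinner_dn u huK
      rwa [← mul_smul] at this
    have hmid : (Cg⁻¹) ^ n * ((Cw⁻¹) ^ n * 1) * γ ^ (n * n) ≤ Mw ^ n * (Mg ^ n * 1) := by
      have hγp : (0:ℝ) < γ ^ (n * n) := by positivity
      calc (Cg⁻¹) ^ n * ((Cw⁻¹) ^ n * 1) * γ ^ (n * n)
          ≤ u ((g ^ n * w ^ n) • x₀) * γ ^ (n * n) :=
            mul_le_mul_of_nonneg_right hdn hγp.le
        _ = u ((w ^ n * g ^ n) • x₀) := (hkey n).symm
        _ ≤ Mw ^ n * (Mg ^ n * 1) := hup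
    calc γ ^ (n * n)
        = ((Cg⁻¹) ^ n * ((Cw⁻¹) ^ n * 1) * γ ^ (n * n)) * (Cg ^ n * Cw ^ n) := by
          rw [inv_pow, inv_pow]
          field_simp
      _ ≤ (Mw ^ n * (Mg ^ n * 1)) * (Cg ^ n * Cw ^ n) :=
          mul_le_mul_of_nonneg_right hmid (by positivity)
      _ = K ^ n := by
          rw [hK, mul_pow, mul_pow, mul_pow]
          ring
  -- Step F : conclude
  by_contra hcon
  push_neg at hcon
  obtain ⟨n0, hn0⟩ := pow_unbounded_of_one_lt K hcon
  have hn : K < γ ^ (n0 + 1) :=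
    lt_of_lt_of_le hn0 (pow_le_pow_right₀ hcon.le (Nat.le_succ n0))
  have h2 : K ^ (n0 + 1) < (γ ^ (n0 + 1)) ^ (n0 + 1) :=
    pow_lt_pow_left₀ hn hKp.le (Nat.succ_ne_zero n0)
  rw [← pow_mul] at h2
  exact absurd (hbound (n0 + 1)) (not_le.2 h2)

/-! ### extreme points are fixed by quotient-central commutators -/

lemma extreme_fixed {c : X → ℝ} {x₀ : X} [Countable X] (hb0 : ∀ x y, 0 ≤ b x y)
    (hbs : ∀ x, Summable (b x)) (hconn : Connected b) (hcocpt : CocompactAction G X)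
    (hH : HInvOn b c (Set.univ : Set G)) {N : Subgroup G} [N.Normal]
    (hN : ∀ u ∈ Kset b c x₀, ∀ ν ∈ N, shift ν u = u) {g w : G}
    (hzc : ((⁅g, w⁆ : G) : G ⧸ N) ∈ Subgroup.center (G ⧸ N))
    {u : X → ℝ} (hu : u ∈ Set.extremePoints ℝ (Kset b c x₀)) :
    shift ⁅g, w⁆ u = u := by
  obtain ⟨Cst, hC⟩ := exists_Kharnack (c := c) hb0 hbs hconn x₀
  set z : G := ⁅g, w⁆ with hzdef
  have huK : u ∈ Kset b c x₀ := hu.1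
  have heig : ∀ x, u (z⁻¹ • x) = u (z⁻¹ • x₀) * u x :=
    extreme_eigen hb0 hbs hconn hcocpt hH hN hzc hu
  set γ : ℝ := u (z⁻¹ • x₀) with hγ
  have hγpos : 0 < γ := Kset_pos hC u huK _
  have h1 : γ ≤ 1 := gamma_le hb0 hbs hconn hH hN hzc huK hγpos heig
  have heig' : ∀ x, u (⁅w, g⁆⁻¹ • x) = γ⁻¹ * u x := by
    intro x
    have e : ⁅w, g⁆⁻¹ = z := by rw [commutatorElement_inv]
    rw [e]
    have h := heig (z • x)
    rw [inv_smul_smul] at h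
    field_simp [h]
    rw [h]; ring
  have hzc' : ((⁅w, g⁆ : G) : G ⧸ N) ∈ Subgroup.center (G ⧸ N) := by
    have e : (⁅w, g⁆ : G) = z⁻¹ := by rw [hzdef, commutatorElement_inv]
    rw [e]
    exact inv_mem hzc
  have h2 : γ⁻¹ ≤ 1 := gamma_le hb0 hbs hconn hH hN hzc' huK (by positivity) heig'
  have hγ1 : γ = 1 := by
    have hinvpos : 0 < γ⁻¹ := by positivity
    have hmul : γ * γ⁻¹ = 1 := mul_inv_cancel₀ (ne_of_gt hγpos)
    nlinarith [h2, hγpos]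
  funext x
  show u (z⁻¹ • x) = u x
  rw [heig x, hγ1, one_mul]

/-! ### Krein-Milman extension -/

lemma Kset_fixed_of_extreme_fixed {c : X → ℝ} {x₀ : X} [Countable X]
    (hb0 : ∀ x y, 0 ≤ b x y) (hbs : ∀ x, Summable (b x)) (hconn : Connected b)
    (z : G) (hext : ∀ u ∈ Set.extremePoints ℝ (Kset b c x₀), shift z u = u) :
    ∀ u ∈ Kset b c x₀, shift z u = u := by
  obtain ⟨Cst, hC⟩ := exists_Kharnack (c := c) hb0 hbs hconn x₀
  set Fix : Set (X → ℝ) := {f | shift z f = f} with hFix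
  have hclosed : IsClosed Fix := by
    have he : Fix = ⋂ x : X, {f : X → ℝ | f (z⁻¹ • x) = f x} := by
      ext f
      simp only [hFix, Set.mem_iInter, Set.mem_setOf_eq]
      constructor
      · intro h x; exact congrFun h x
      · intro h; funext x; exact h x
    rw [he]
    exact isClosed_iInter fun x => isClosed_eq (continuous_apply _) (continuous_apply _)
  have hconvex : Convex ℝ Fix := by
    intro f hf g hg s t hs ht hst
    show shift z (s • f + t • g) = s • f + t • g
    funext x
    show s * f (z⁻¹ • x) + t * g (z⁻¹ • x) = s * f x + t * g x
    have h1 : f (z⁻¹ • x) = f x := congrFun hf x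
    have h2 : g (z⁻¹ • x) = g x := congrFun hg x
    rw [h1, h2]
  have hKM := closure_convexHull_extremePoints (Kset_isCompact hC) (Kset_convex hb0 hbs)
  intro u hu
  have : Kset b c x₀ ⊆ Fix := by
    rw [← hKM]
    exact closure_minimal (convexHull_min hext hconvex) hclosed
  exact this hu

/-! ### the induction step -/

lemma step_inv {c : X → ℝ} {x₀ : X} [Countable X] (hb0 : ∀ x y, 0 ≤ b x y)
    (hbs : ∀ x, Summable (b x)) (hconn : Connected b) (hcocpt : CocompactAction G X)
    (hH : HInvOn b c (Set.univ : Set G)) (m : ℕ)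
    (hstep : ∀ u ∈ Kset b c x₀, ∀ ν ∈ Subgroup.lowerCentralSeries (⊤ : Subgroup G) (m + 2), shift ν u = u) :
    ∀ u ∈ Kset b c x₀, ∀ ζ ∈ Subgroup.lowerCentralSeries (⊤ : Subgroup G) (m + 1), shift ζ u = u := by
  set N : Subgroup G := Subgroup.lowerCentralSeries (⊤ : Subgroup G) (m + 2) with hN
  set fixSub : Subgroup G :=
    { carrier := {g : G | ∀ u ∈ Kset b c x₀, shift g u = u}
      one_mem' := by
        intro u hu
        exact shift_one u
      mul_mem' := by
        intro a b' ha hb' u hu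
        rw [shift_mul, hb' u hu, ha u hu]
      inv_mem' := by
        intro a ha u hu
        have h := ha u hu
        have h2 : shift a⁻¹ (shift a u) = u := by
          rw [← shift_mul, inv_mul_cancel, shift_one]
        rw [h] at h2
        exact h2 } with hfix
  suffices hle : Subgroup.lowerCentralSeries (⊤ : Subgroup G) (m + 1) ≤ fixSub by
    intro u hu ζ hζ
    exact hle hζ u hu
  have he : Subgroup.lowerCentralSeries (⊤ : Subgroup G) (m + 1) = ⁅Subgroup.lowerCentralSeries (⊤ : Subgroup G) m, (⊤ : Subgroup G)⁆ := rfl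
  rw [he, Subgroup.commutator_le]
  intro p hp q hq
  show ∀ u ∈ Kset b c x₀, shift ⁅p, q⁆ u = u
  have hz1 : ⁅p, q⁆ ∈ Subgroup.lowerCentralSeries (⊤ : Subgroup G) (m + 1) := by
    rw [he]
    exact Subgroup.commutator_mem_commutator hp (Subgroup.mem_top q)
  have hzc : ((⁅p, q⁆ : G) : G ⧸ N) ∈ Subgroup.center (G ⧸ N) := by
    rw [Subgroup.mem_center_iff]
    intro x
    obtain ⟨h, rfl⟩ := QuotientGroup.mk_surjective x
    show ((h * ⁅p, q⁆ : G) : G ⧸ N) = ((⁅p, q⁆ * h : G) : G ⧸ N)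
    rw [QuotientGroup.eq]
    have hgrp : (h * ⁅p, q⁆)⁻¹ * (⁅p, q⁆ * h) = ⁅⁅p, q⁆⁻¹, h⁻¹⁆ := by group
    rw [hgrp]
    have : (⁅⁅p, q⁆⁻¹, h⁻¹⁆ : G) ∈ ⁅Subgroup.lowerCentralSeries (⊤ : Subgroup G) (m + 1), (⊤ : Subgroup G)⁆ :=
      Subgroup.commutator_mem_commutator (inv_mem hz1) (Subgroup.mem_top _)
    exact this
  exact Kset_fixed_of_extreme_fixed hb0 hbs hconn ⁅p, q⁆
    (fun u' hu' => extreme_fixed hb0 hbs hconn hcocpt hH hstep hzc hu')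

end WithC

/-- **Margulis' theorem for group actions, part (a).**
Every element of `𝓚` is `[G,G]`-invariant. -/
theorem Kset_commutator_invariant {X : Type*} [Countable X] {G : Type*} [Group G]
    [MulAction G X] [Group.IsNilpotent G]
    (b : X → X → ℝ) (c : X → ℝ)
    (hb0 : ∀ x y, 0 ≤ b x y) (hbd : ∀ x, b x x = 0) (hbs : ∀ x, Summable (b x))
    (hconn : Connected b) (hcocpt : CocompactAction G X)
    (hH : HInvOn b c (Set.univ : Set G)) (x₀ : X) :
    ∀ f ∈ Kset b c x₀, ∀ g ∈ commutator G, shift g f = f := by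
  intro f hf g hg
  obtain ⟨n, hn⟩ := nilpotent_iff_lowerCentralSeries.1 ‹Group.IsNilpotent G›
  have base : ∀ u ∈ Kset b c x₀, ∀ ζ ∈ Subgroup.lowerCentralSeries (⊤ : Subgroup G) (n + 1), shift ζ u = u := by
    intro u hu ζ hζ
    have hsub : Subgroup.lowerCentralSeries (⊤ : Subgroup G) (n + 1) ≤ Subgroup.lowerCentralSeries (⊤ : Subgroup G) n :=
      Subgroup.lowerCentralSeries_antitone _ (Nat.le_succ n)
    rw [hn] at hsub
    have : ζ = 1 := Subgroup.mem_bot.1 (hsub hζ)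
    rw [this, shift_one]
  have desc : ∀ k, k ≤ n → ∀ u ∈ Kset b c x₀,
      ∀ ζ ∈ Subgroup.lowerCentralSeries (⊤ : Subgroup G) (n + 1 - k), shift ζ u = u := by
    intro k
    induction k with
    | zero => intro _; simpa using base
    | succ k ih =>
      intro hk1
      have hk : k ≤ n := le_trans (Nat.le_succ k) hk1
      have e1 : n + 1 - (k + 1) = (n - k - 1) + 1 := by omega
      have e2 : (n - k - 1) + 2 = n + 1 - k := by omega
      rw [e1]
      apply step_inv hb0 hbs hconn hcocpt hH (n - k - 1)
      rw [e2]
      exact ih hk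
  have h1 := desc n (le_refl n) f hf g
  rw [show n + 1 - n = 1 from by omega, Subgroup.top_lowerCentralSeries_one] at h1
  exact h1 hg


end GraphPaper
end
end
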